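/- arXiv:0911.1146 — 6 statements merged into one kernel-verified Lean document; each statement's English description precedes it below -/
import Mathlib

section
/- Let T be a rooted tree with leaf set 𝒳, 𝒢 a finite set of genes, G : 𝒳 → Set 𝒢, and k a positive integer. Define F*(v) = { g ∈ 𝒢 : v lies on the path between some pair of leaves x₁, x₂ with g ∈ G(x₁), g ∈ G(x₂) }. Then T admits a (G,k)-gene labelling (a map F : V → Set 𝒢 with F(x) = G(x) on leaves, |F(v)| ≤ k for all v, and {v : g ∈ F(v)} connected in T for each g) if and only if |F*(v)| ≤ k for every vertex v. -/
open SimpleGraph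

/-- A leaf (vertex with subsingleton neighbor set) lying on a path is an endpoint. -/
lemma leaf_endpoint {V : Type*} {T : SimpleGraph V} {a b x : V}
    (p : T.Walk a b) (hp : p.IsPath) (hx : x ∈ p.support)
    (hl : (T.neighborSet x).Subsingleton) : x = a ∨ x = b := by
  induction p with
  | nil => simp at hx; exact Or.inl hx
  | @cons u c _ h q ih =>
    rw [SimpleGraph.Walk.support_cons] at hx
    rcases List.mem_cons.1 hx with h1 | h2
    · exact Or.inl h1
    · have hq : q.IsPath := hp.of_cons
      rcases ih hq h2 with rfl | rfl
      · -- x = c, the second vertex; show q must be nil (then c = b)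
        cases q with
        | nil => exact Or.inr rfl
        | @cons _ d _ h' q' =>
          exfalso
          have hud : u ≠ d := by
            intro hud
            have := hp.support_nodup
            rw [SimpleGraph.Walk.support_cons] at this
            have hn := (List.nodup_cons.1 this).1
            apply hn
            subst hud
            rw [SimpleGraph.Walk.support_cons]
            exact List.mem_cons_of_mem _ q'.start_mem_support
          have h1 : u ∈ T.neighborSet x := h.symm
          have h2 : d ∈ T.neighborSet x := h'
          exact hud (hl h1 h2)
      · exact Or.inr rfl

/-- A walk whose support lies in `S` gives reachability in the induced graph. -/
lemma reachable_induce_of_walk {V : Type*} {T : SimpleGraph V} {S : Set V} {a b : V}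
    (w : T.Walk a b) (hw : ∀ x ∈ w.support, x ∈ S) :
    (T.induce S).Reachable ⟨a, hw a w.start_mem_support⟩ ⟨b, hw b w.end_mem_support⟩ := by
  induction w with
  | nil => rfl
  | @cons u c _ h q ih =>
    have hu : u ∈ S := hw u (by simp)
    have hc : c ∈ S := hw c (by simp [SimpleGraph.Walk.support_cons,
      q.start_mem_support])
    have hq : ∀ x ∈ q.support, x ∈ S := fun x hx => hw x (by
      rw [SimpleGraph.Walk.support_cons]; exact List.mem_cons_of_mem _ hx)
    have hadj : (T.induce S).Adj ⟨u, hu⟩ ⟨c, hc⟩ := by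
      simp [SimpleGraph.comap_adj]
      exact h
    exact (hadj.reachable).trans (ih hq)

/-- A tree `T` with leaf set `X` admits a `(G,k)`-gene labelling if and only if
`|F*(v)| ≤ k` for every vertex `v`, where
`F*(v) = {g | v lies on the path between two leaves both carrying g}`. -/
theorem stmt4 {V 𝒢 : Type*} [Fintype 𝒢] (T : SimpleGraph V) (hT : T.IsTree)
    (X : Set V) (hX : ∀ x ∈ X, (T.neighborSet x).Subsingleton)
    (Gm : V → Set 𝒢) (k : ℕ) (hk : 0 < k) :
    (∃ F : V → Set 𝒢,
        (∀ x ∈ X, F x = Gm x) ∧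
        (∀ v : V, (F v).ncard ≤ k) ∧
        (∀ g : 𝒢, (T.induce {v | g ∈ F v}).Preconnected)) ↔
    (∀ v : V,
      ({g : 𝒢 | ∃ x₁ ∈ X, ∃ x₂ ∈ X, g ∈ Gm x₁ ∧ g ∈ Gm x₂ ∧
        ∃ p : T.Walk x₁ x₂, p.IsPath ∧ v ∈ p.support}).ncard ≤ k) := by
  set Fstar : V → Set 𝒢 := fun v =>
    {g : 𝒢 | ∃ x₁ ∈ X, ∃ x₂ ∈ X, g ∈ Gm x₁ ∧ g ∈ Gm x₂ ∧
      ∃ p : T.Walk x₁ x₂, p.IsPath ∧ v ∈ p.support} with hFstar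
  classical
  constructor
  · rintro ⟨F, hFX, hFk, hFconn⟩ v
    refine le_trans (Set.ncard_le_ncard ?_ (Set.toFinite _)) (hFk v)
    rintro g ⟨x₁, hx₁, x₂, hx₂, hg₁, hg₂, p, hp, hv⟩
    -- x₁ and x₂ lie in S = {v | g ∈ F v}; connectivity of S forces v ∈ S
    set S : Set V := {v | g ∈ F v} with hS
    have hx₁S : x₁ ∈ S := by rw [hS]; simp only [Set.mem_setOf_eq, hFX x₁ hx₁]; exact hg₁
    have hx₂S : x₂ ∈ S := by rw [hS]; simp only [Set.mem_setOf_eq, hFX x₂ hx₂]; exact hg₂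
    obtain ⟨w⟩ := hFconn g ⟨x₁, hx₁S⟩ ⟨x₂, hx₂S⟩
    -- map the walk to T
    have hmap : ∃ w' : T.Walk x₁ x₂, ∀ x ∈ w'.support, x ∈ S := by
      refine ⟨w.map (SimpleGraph.Embedding.induce S).toHom, ?_⟩
      intro x hx
      have hx' : x ∈ w.support.map (SimpleGraph.Embedding.induce (G := T) S).toHom := by
        rw [← SimpleGraph.Walk.support_map]; exact hx
      rw [List.mem_map] at hx'
      obtain ⟨⟨y, hy⟩, _, rfl⟩ := hx'
      exact hy
    obtain ⟨w', hw'⟩ := hmap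
    -- the bypass of w' is a path, hence equals p by uniqueness
    have huniq := hT.existsUnique_path x₁ x₂
    obtain ⟨q, -, hq⟩ := huniq
    have h1 : w'.bypass = p := (hq w'.bypass w'.bypass_isPath).trans (hq p hp).symm
    have hvS : v ∈ S := hw' v (w'.support_bypass_subset (h1 ▸ hv))
    exact hvS
  · intro hle
    refine ⟨Fstar, ?_, hle, ?_⟩
    · -- on leaves, Fstar = Gm
      intro x hx
      ext g
      constructor
      · rintro ⟨x₁, hx₁, x₂, hx₂, hg₁, hg₂, p, hp, hmem⟩
        rcases leaf_endpoint p hp hmem (hX x hx) with rfl | rfl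
        · exact hg₁
        · exact hg₂
      · intro hg
        exact ⟨x, hx, x, hx, hg, hg, SimpleGraph.Walk.nil, SimpleGraph.Walk.IsPath.nil, by simp⟩
    · -- connectivity of {v | g ∈ Fstar v}
      intro g
      rintro ⟨u, hu⟩ ⟨w, hw⟩
      obtain ⟨x₁, hx₁, x₂, hx₂, hg₁, hg₂, p, hp, hup⟩ := hu
      obtain ⟨y₁, hy₁, y₂, hy₂, hg₁', hg₂', q, hq, hwq⟩ := hw
      -- middle path from x₁ to y₁
      obtain ⟨r⟩ := hT.isConnected.preconnected x₁ y₁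
      -- walk from u to w in S: reverse of (p.takeUntil u), then r.bypass, then... 
      set S : Set V := {v | g ∈ Fstar v} with hS
      have hPmem : ∀ x ∈ p.support, x ∈ S :=
        fun x hxs => ⟨x₁, hx₁, x₂, hx₂, hg₁, hg₂, p, hp, hxs⟩
      have hQmem : ∀ x ∈ q.support, x ∈ S :=
        fun x hxs => ⟨y₁, hy₁, y₂, hy₂, hg₁', hg₂', q, hq, hxs⟩
      have hRmem : ∀ x ∈ r.bypass.support, x ∈ S :=
        fun x hxs => ⟨x₁, hx₁, y₁, hy₁, hg₁, hg₁', r.bypass, r.bypass_isPath, hxs⟩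
      -- build full walk
      have h1 : ∀ x ∈ ((p.takeUntil u hup).reverse).support, x ∈ S := by
        intro x hx
        rw [SimpleGraph.Walk.support_reverse, List.mem_reverse] at hx
        exact hPmem x (p.support_takeUntil_subset hup hx)
      have h2 : ∀ x ∈ (q.takeUntil w hwq).support, x ∈ S := by
        intro x hx
        exact hQmem x (q.support_takeUntil_subset hwq hx)
      have big : ∀ x ∈ (((p.takeUntil u hup).reverse.append r.bypass).append
          (q.takeUntil w hwq)).support, x ∈ S := by
        intro x hx
        rw [SimpleGraph.Walk.support_append, List.mem_append] at hx
        rcases hx with hx | hx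
        · rw [SimpleGraph.Walk.support_append, List.mem_append] at hx
          rcases hx with hx | hx
          · exact h1 x hx
          · exact hRmem x (List.mem_of_mem_tail hx)
        · exact h2 x (List.mem_of_mem_tail hx)
      exact reachable_induce_of_walk _ big
end

section
/- Let H = (V_H, E_H) be a finite undirected graph and k' a natural number. Suppose (T, {X_i}) is a tree decomposition of H of width at most k'. Define 𝒳 = E_H, 𝒢 = V_H, k = k'+1, and G(e) = {u, v} for each edge e = {u,v} ∈ E_H. Then there exists a tree N whose leaves are in bijection with 𝒳 and a map F from the vertices of N to subsets of 𝒢 such that: F(leaf corresponding to e) = G(e), |F(w)| ≤ k for all vertices w, and for each vertex g ∈ V_H the set {w : g ∈ F(w)} induces a connected subtree of N. -/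
/-- A rooted tree, given as a digraph: there is a root from which every vertex is
reachable, every vertex has at most one parent, and there are no directed cycles. -/
def IsRootedTree {V : Type*} (A : V → V → Prop) : Prop :=
  (∃ ρ : V, ∀ v : V, Relation.ReflTransGen A ρ v) ∧
  (∀ a b c : V, A a c → A b c → a = b) ∧
  (∀ a : V, ¬ Relation.TransGen A a a)

/-- A sink (leaf) of a digraph: a vertex with no outgoing arcs. -/
def IsSink {V : Type*} (A : V → V → Prop) (v : V) : Prop := ∀ w : V, ¬ A v w

/-- The subdigraph induced by `S` is rooted (hence connected): if `S` is nonempty, it has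
a vertex from which every vertex of `S` is reachable by a directed path inside `S`. -/
def RootedOn {V : Type*} (A : V → V → Prop) (S : Set V) : Prop :=
  S.Nonempty → ∃ r ∈ S, ∀ x ∈ S,
    Relation.ReflTransGen (fun a b => A a b ∧ a ∈ S ∧ b ∈ S) r x

open SimpleGraph Walk

section TDAux
variable {I : Type*} [DecidableEq I] {T : SimpleGraph I} (hT : T.IsTree) (ρ : I)

/-- The unique path from `x` to the root `ρ` in the tree `T`. -/
noncomputable def tdP (x : I) : T.Walk x ρ := (hT.existsUnique_path x ρ).choose

lemma tdP_isPath (x : I) : (tdP hT ρ x).IsPath := (hT.existsUnique_path x ρ).choose_spec.1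

lemma tdP_unique {x : I} (q : T.Walk x ρ) (hq : q.IsPath) : q = tdP hT ρ x :=
  (hT.existsUnique_path x ρ).choose_spec.2 q hq

/-- The parent of a vertex (the root is its own parent). -/
noncomputable def tdPar (x : I) : I := (tdP hT ρ x).getVert 1

/-- The depth of a vertex. -/
noncomputable def tdDep (x : I) : ℕ := (tdP hT ρ x).length

lemma tdP_rho : tdP hT ρ ρ = Walk.nil :=
  (tdP_unique hT ρ Walk.nil IsPath.nil).symm

lemma tdPar_rho : tdPar hT ρ ρ = ρ := by
  rw [tdPar, tdP_rho]
  rfl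

lemma tdPC {x : I} (hx : x ≠ ρ) :
    ∃ h : T.Adj x (tdPar hT ρ x), tdP hT ρ x = Walk.cons h (tdP hT ρ (tdPar hT ρ x)) := by
  obtain ⟨w, h, q, hq⟩ := Walk.exists_eq_cons_of_ne hx (tdP hT ρ x)
  have hqp : q.IsPath := by
    have := tdP_isPath hT ρ x
    rw [hq] at this
    exact this.of_cons
  have hqP : q = tdP hT ρ w := tdP_unique hT ρ q hqp
  have hw : tdPar hT ρ x = w := by
    rw [tdPar, hq, Walk.getVert_cons_succ, Walk.getVert_zero]
  subst hw
  exact ⟨h, by rw [hq, hqP]⟩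

lemma tdDep_par {x : I} (hx : x ≠ ρ) :
    tdDep hT ρ (tdPar hT ρ x) + 1 = tdDep hT ρ x := by
  obtain ⟨h, heq⟩ := tdPC hT ρ hx
  rw [tdDep, tdDep, heq, Walk.length_cons]

lemma tdDep_zero {x : I} (h : tdDep hT ρ x = 0) : x = ρ :=
  Walk.eq_of_length_eq_zero h

lemma tdPar_mem {x : I} (hx : x ≠ ρ) : tdPar hT ρ x ∈ (tdP hT ρ x).support := by
  obtain ⟨h, heq⟩ := tdPC hT ρ hx
  rw [heq, Walk.support_cons]
  exact List.mem_cons_of_mem _ (Walk.start_mem_support _)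

lemma tdDrop {x y : I} (h : x ∈ (tdP hT ρ y).support) :
    tdP hT ρ x = (tdP hT ρ y).dropUntil x h :=
  (tdP_unique hT ρ _ ((tdP_isPath hT ρ y).dropUntil h)).symm

lemma tdSub {x y : I} (h : x ∈ (tdP hT ρ y).support) :
    ∀ z ∈ (tdP hT ρ x).support, z ∈ (tdP hT ρ y).support := by
  intro z hz
  rw [tdDrop hT ρ h] at hz
  exact Walk.support_dropUntil_subset _ h hz

lemma tdMono {x y : I} (h : x ∈ (tdP hT ρ y).support) (hxy : x ≠ y) :
    tdDep hT ρ x < tdDep hT ρ y := by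
  have hspec := Walk.take_spec (tdP hT ρ y) h
  have hlen := congrArg Walk.length hspec
  rw [Walk.length_append] at hlen
  have hdx : (tdP hT ρ x).length = ((tdP hT ρ y).dropUntil x h).length :=
    congrArg Walk.length (tdDrop hT ρ h)
  have htne : ((tdP hT ρ y).takeUntil x h).length ≠ 0 := by
    intro h0
    exact hxy (Walk.eq_of_length_eq_zero h0).symm
  show (tdP hT ρ x).length < (tdP hT ρ y).length
  omega

lemma tdMono' {x y : I} (h : x ∈ (tdP hT ρ y).support) :
    tdDep hT ρ x ≤ tdDep hT ρ y := by
  by_cases hxy : x = y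
  · subst hxy; exact le_rfl
  · exact (tdMono hT ρ h hxy).le

lemma tdAdj {x y : I} (h : T.Adj x y) :
    tdPar hT ρ x = y ∨ tdPar hT ρ y = x := by
  by_cases hx : x ∈ (tdP hT ρ y).support
  · right
    have hy : y ∉ (tdP hT ρ x).support := by
      intro hy
      exact absurd (tdMono hT ρ hy h.ne') ((tdMono hT ρ hx h.ne).asymm)
    have hpath : (Walk.cons h.symm (tdP hT ρ x)).IsPath :=
      (tdP_isPath hT ρ x).cons hy
    have := tdP_unique hT ρ _ hpath
    rw [tdPar, ← this, Walk.getVert_cons_succ, Walk.getVert_zero]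
  · left
    have hpath : (Walk.cons h (tdP hT ρ y)).IsPath :=
      (tdP_isPath hT ρ y).cons hx
    have := tdP_unique hT ρ _ hpath
    rw [tdPar, ← this, Walk.getVert_cons_succ, Walk.getVert_zero]

lemma tdAnc : ∀ {y r : I} (q : T.Walk y r) {x : I},
    x ∈ (tdP hT ρ y).support → x ∈ (tdP hT ρ r).support ∨ x ∈ q.support := by
  intro y r q
  induction q with
  | nil => exact fun hx => Or.inl hx
  | @cons u v w h q₂ ih =>
    intro x hx
    by_cases huρ : u = ρ
    · subst huρ
      rw [tdP_rho] at hx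
      simp only [Walk.support_nil, List.mem_singleton] at hx
      subst hx
      exact Or.inr (Walk.start_mem_support _)
    · rcases tdAdj hT ρ h with hpar | hpar
      · obtain ⟨h', heq⟩ := tdPC hT ρ huρ
        rw [heq, Walk.support_cons, List.mem_cons] at hx
        rcases hx with rfl | hx
        · exact Or.inr (Walk.start_mem_support _)
        · rw [hpar] at hx
          rcases ih hx with h1 | h1
          · exact Or.inl h1
          · exact Or.inr (by rw [Walk.support_cons]; exact List.mem_cons_of_mem _ h1)
      · have hvρ : v ≠ ρ := by
          intro hvρ
          rw [hvρ, tdPar_rho] at hpar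
          exact huρ hpar.symm
        obtain ⟨h', heq⟩ := tdPC hT ρ hvρ
        have hx' : x ∈ (tdP hT ρ v).support := by
          rw [heq, Walk.support_cons]
          refine List.mem_cons_of_mem _ ?_
          rw [hpar]
          exact hx
        rcases ih hx' with h1 | h1
        · exact Or.inl h1
        · exact Or.inr (by rw [Walk.support_cons]; exact List.mem_cons_of_mem _ h1)

lemma tdK (Cg : Set I) (r : I) : ∀ (n : ℕ) {x : I} (q : T.Walk x r), q.length ≤ n →
    (∀ z ∈ q.support, z ∈ Cg) → x ∉ (tdP hT ρ r).support →
    x ≠ ρ ∧ tdPar hT ρ x ∈ Cg := by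
  intro n
  induction n with
  | zero =>
    intro x q hlen hsupp hxr
    cases q with
    | nil => exact absurd (Walk.start_mem_support _) hxr
    | cons h q₂ => simp [Walk.length_cons] at hlen
  | succ n ih =>
    intro x q hlen hsupp hxr
    cases q with
    | nil => exact absurd (Walk.start_mem_support _) hxr
    | @cons u v w h q₂ =>
      have hxρ : x ≠ ρ := by
        intro hxρ
        exact hxr (hxρ ▸ Walk.end_mem_support _)
      refine ⟨hxρ, ?_⟩
      rcases tdAdj hT ρ h with hpar | hpar
      · rw [hpar]
        exact hsupp v (by rw [Walk.support_cons]; exact List.mem_cons_of_mem _ (Walk.start_mem_support _))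
      · -- descending first step: v's parent is x, so x ∈ supp (tdP v)
        have hvρ : v ≠ ρ := by
          intro hvρ
          rw [hvρ, tdPar_rho] at hpar
          exact hxρ hpar.symm
        obtain ⟨h', heq⟩ := tdPC hT ρ hvρ
        have hxv : x ∈ (tdP hT ρ v).support := by
          rw [heq, Walk.support_cons]
          refine List.mem_cons_of_mem _ ?_
          rw [hpar]
          exact Walk.start_mem_support _
        rcases tdAnc hT ρ q₂ hxv with h1 | h1
        · exact absurd h1 hxr
        · -- x occurs later in q₂; recurse on dropUntil
          have hq3 := q₂.dropUntil x h1
          refine (ih (q₂.dropUntil x h1) ?_ ?_ hxr).2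
          · have := Walk.length_dropUntil_le q₂ h1
            rw [Walk.length_cons] at hlen
            omega
          · intro z hz
            exact hsupp z (by
              rw [Walk.support_cons]
              exact List.mem_cons_of_mem _ (Walk.support_dropUntil_subset q₂ h1 hz))

lemma tdChain (C : Set I) (r : I)
    (hstep : ∀ x ∈ C, x ≠ r → x ≠ ρ ∧ tdPar hT ρ x ∈ C) :
    ∀ x ∈ C, Relation.ReflTransGen
      (fun a b => (b ≠ ρ ∧ tdPar hT ρ b = a) ∧ a ∈ C ∧ b ∈ C) r x := by
  have main : ∀ (n : ℕ) (x : I), tdDep hT ρ x ≤ n → x ∈ C →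
      Relation.ReflTransGen
        (fun a b => (b ≠ ρ ∧ tdPar hT ρ b = a) ∧ a ∈ C ∧ b ∈ C) r x := by
    intro n
    induction n with
    | zero =>
      intro x hdep hx
      by_cases hxr : x = r
      · subst hxr; exact Relation.ReflTransGen.refl
      · exact absurd (tdDep_zero hT ρ (Nat.le_zero.mp hdep)) (hstep x hx hxr).1
    | succ n ih =>
      intro x hdep hx
      by_cases hxr : x = r
      · subst hxr; exact Relation.ReflTransGen.refl
      · obtain ⟨hxρ, hpar⟩ := hstep x hx hxr
        have hd := tdDep_par hT ρ hxρ
        refine Relation.ReflTransGen.tail (ih (tdPar hT ρ x) (by omega) hpar) ?_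
        exact ⟨⟨hxρ, rfl⟩, hpar, hx⟩
  exact fun x hx => main (tdDep hT ρ x) x le_rfl hx

lemma walk_in_set {C : Set I} : ∀ {a b : ↥C} (_ : (T.induce C).Walk a b),
    ∃ q : T.Walk a.1 b.1, ∀ z ∈ q.support, z ∈ C := by
  intro a b w
  induction w with
  | nil => exact ⟨Walk.nil, by simp⟩
  | @cons u v w h q₂ ih =>
    obtain ⟨q, hq⟩ := ih
    have hadj : T.Adj u.1 v.1 := h
    refine ⟨Walk.cons hadj q, ?_⟩
    intro z hz
    rw [Walk.support_cons, List.mem_cons] at hz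
    rcases hz with rfl | hz
    · exact u.2
    · exact hq z hz

lemma tdM : ∀ (n : ℕ) (x : I), tdDep hT ρ x ≤ n → ∀ a ∈ (tdP hT ρ x).support,
    a = x ∨ ∃ c ∈ (tdP hT ρ x).support, c ≠ ρ ∧ tdPar hT ρ c = a := by
  intro n
  induction n with
  | zero =>
    intro x hdep a ha
    have hxρ : x = ρ := tdDep_zero hT ρ (Nat.le_zero.mp hdep)
    subst hxρ
    rw [tdP_rho] at ha
    simp only [Walk.support_nil, List.mem_singleton] at ha
    exact Or.inl ha
  | succ n ih =>
    intro x hdep a ha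
    by_cases hxρ : x = ρ
    · subst hxρ
      rw [tdP_rho] at ha
      simp only [Walk.support_nil, List.mem_singleton] at ha
      exact Or.inl ha
    · obtain ⟨h', heq⟩ := tdPC hT ρ hxρ
      rw [heq, Walk.support_cons, List.mem_cons] at ha
      rcases ha with rfl | ha
      · exact Or.inl rfl
      · have hdp : tdDep hT ρ (tdPar hT ρ x) ≤ n := by
          have := tdDep_par hT ρ hxρ
          omega
        rcases ih (tdPar hT ρ x) hdp a ha with rfl | ⟨c, hc, hcρ, hcp⟩
        · exact Or.inr ⟨x, Walk.start_mem_support _, hxρ, rfl⟩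
        · refine Or.inr ⟨c, ?_, hcρ, hcp⟩
          rw [heq, Walk.support_cons]
          exact List.mem_cons_of_mem _ hc

end TDAux

set_option maxHeartbeats 1000000 in
/-- Given a tree decomposition of a graph `H` of width at most `k'`, taking
`𝒳 = E_H`, `𝒢 = V_H`, `k = k'+1` and `G(e) = ` the endpoints of `e`, there is a tree `N`
whose leaves are in bijection with `𝒳` admitting a `(G,k)`-gene labelling. -/
theorem stmt6 {VH : Type*} [Fintype VH] (H : SimpleGraph VH) (k' : ℕ)
    {I : Type*} (T : SimpleGraph I) (Xb : I → Set VH)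
    (hT : T.IsTree)
    (hcover : ∀ v : VH, ∃ i, v ∈ Xb i)
    (hedge : ∀ u v : VH, H.Adj u v → ∃ i, u ∈ Xb i ∧ v ∈ Xb i)
    (hconn : ∀ v : VH, (T.induce {i | v ∈ Xb i}).Preconnected)
    (hwidth : ∀ i, (Xb i).ncard ≤ k' + 1) :
    ∃ (W : Type) (N : W → W → Prop) (F : W → Set VH) (leaf : H.edgeSet → W),
      IsRootedTree N ∧
      Function.Injective leaf ∧
      (∀ e : H.edgeSet, IsSink N (leaf e)) ∧
      (∀ w : W, IsSink N w → ∃ e : H.edgeSet, leaf e = w) ∧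
      (∀ e : H.edgeSet, F (leaf e) = {v : VH | v ∈ (e : Sym2 VH)}) ∧
      (∀ w : W, (F w).ncard ≤ k' + 1) ∧
      (∀ g : VH, RootedOn N {w | g ∈ F w}) := by
  classical
  by_cases hE : IsEmpty H.edgeSet
  · refine ⟨ℕ, fun n m => m = n + 1, fun _ => ∅, fun _ => 0, ⟨⟨0, ?_⟩, ?_, ?_⟩,
      ?_, ?_, ?_, ?_, ?_, ?_⟩
    · intro v
      induction v with
      | zero => exact Relation.ReflTransGen.refl
      | succ n ih => exact Relation.ReflTransGen.tail ih rfl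
    · intro a b c ha hb; omega
    · intro a h
      have key : ∀ b, Relation.TransGen (fun n m : ℕ => m = n + 1) a b → a < b := by
        intro b hb
        induction hb with
        | single h => omega
        | tail _ h ih => omega
      exact absurd (key a h) (lt_irrefl a)
    · intro e; exact hE.elim e
    · intro e; exact hE.elim e
    · intro w hw; exact absurd rfl (hw (w + 1))
    · intro e; exact hE.elim e
    · intro w; simp
    · intro g ⟨w, hw⟩; exact absurd hw (by simp)
  · rw [not_isEmpty_iff] at hE
    obtain ⟨e₀⟩ := hE
    -- choose a bag for each edge
    have hrep : ∀ e : H.edgeSet, ∃ u v : VH, (e : Sym2 VH) = s(u, v) ∧ H.Adj u v := by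
      rintro ⟨e, he⟩
      induction e using Sym2.ind with
      | _ u v => exact ⟨u, v, rfl, H.mem_edgeSet.mp he⟩
    have hbag : ∀ e : H.edgeSet, ∃ j, ∀ v ∈ (e : Sym2 VH), v ∈ Xb j := by
      intro e
      obtain ⟨u, v, hee, hadj⟩ := hrep e
      obtain ⟨j, hju, hjv⟩ := hedge u v hadj
      refine ⟨j, ?_⟩
      intro x hx
      rw [hee, Sym2.mem_iff] at hx
      rcases hx with rfl | rfl
      · exact hju
      · exact hjv
    choose i hi using hbag
    set ρ : I := i e₀ with hρdef
    -- 2 ≤ k' + 1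
    have h2k : 2 ≤ k' + 1 := by
      obtain ⟨u, v, hee, hadj⟩ := hrep e₀
      have huv : ({u, v} : Set VH) ⊆ Xb (i e₀) := by
        intro x hx
        rcases hx with rfl | rfl
        · exact hi e₀ x (by rw [hee]; exact Sym2.mem_mk_left _ _)
        · exact hi e₀ _ (by rw [hee]; exact Sym2.mem_mk_right _ _)
      calc 2 = ({u, v} : Set VH).ncard := (Set.ncard_pair hadj.ne).symm
        _ ≤ (Xb (i e₀)).ncard := Set.ncard_le_ncard huv (Set.toFinite _)
        _ ≤ k' + 1 := hwidth _
    set S : Set I := {x | ∃ e : H.edgeSet, x ∈ (tdP hT ρ (i e)).support} with hSdef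
    have hiS : ∀ e, i e ∈ S := fun e => ⟨e, Walk.start_mem_support _⟩
    have hρS : ρ ∈ S := ⟨e₀, Walk.end_mem_support _⟩
    have hSpar : ∀ x ∈ S, x ≠ ρ → tdPar hT ρ x ∈ S := by
      rintro x ⟨e, hx⟩ hxρ
      exact ⟨e, tdSub hT ρ hx _ (tdPar_mem hT ρ hxρ)⟩
    -- the digraph on W₀
    set W₀ := (↥S) ⊕ (↥H.edgeSet) with hW₀def
    set N₀ : W₀ → W₀ → Prop := fun a b =>
      (∃ (a' b' : ↥S), a = Sum.inl a' ∧ b = Sum.inl b' ∧ (b' : I) ≠ ρ ∧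
        tdPar hT ρ (b' : I) = (a' : I)) ∨
      (∃ (a' : ↥S) (e : ↥H.edgeSet), a = Sum.inl a' ∧ b = Sum.inr e ∧ (a' : I) = i e)
      with hN₀def
    set F₀ : W₀ → Set VH :=
      Sum.elim (fun a => Xb a.1) (fun e => {v : VH | v ∈ (e : Sym2 VH)}) with hF₀def
    set root : W₀ := Sum.inl ⟨ρ, hρS⟩ with hrootdef
    -- reachability from the root
    have hbase : ∀ x (hx : x ∈ S),
        Relation.ReflTransGen N₀ root (Sum.inl ⟨x, hx⟩) := by
      intro x hx
      have hchain := tdChain hT ρ S ρ (fun x hx hxρ => ⟨hxρ, hSpar x hx hxρ⟩) x hx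
      have hf := Relation.ReflTransGen.lift (p := N₀)
        (f := fun a : I => if h : a ∈ S then (Sum.inl ⟨a, h⟩ : W₀) else root)
        (h := by
          rintro a b ⟨⟨hbρ, hpar⟩, haS, hbS⟩
          simp only [Function.onFun, dif_pos haS, dif_pos hbS]
          exact Or.inl ⟨⟨a, haS⟩, ⟨b, hbS⟩, rfl, rfl, hbρ, hpar⟩) _ _ hchain
      simp only [Function.onFun, dif_pos hρS, dif_pos hx] at hf
      exact hf
    have hreach : ∀ w : W₀, Relation.ReflTransGen N₀ root w := by
      intro w
      rcases w with a | e
      · have := hbase a.1 a.2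
        exact this
      · refine Relation.ReflTransGen.tail (hbase (i e) (hiS e)) ?_
        exact Or.inr ⟨⟨i e, hiS e⟩, e, rfl, rfl, rfl⟩
    -- unique parents
    have huniq : ∀ a b c : W₀, N₀ a c → N₀ b c → a = b := by
      rintro a b c (⟨a', b', rfl, rfl, hbρ, hpar⟩ | ⟨a', e, rfl, rfl, ha⟩) hb
      · rcases hb with ⟨a'', b'', ha'', hb'', hbρ', hpar'⟩ | ⟨a'', e'', ha'', hb'', he''⟩
        · obtain rfl : b' = b'' := by
            rwa [Sum.inl.injEq] at hb''
          rw [ha'']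
          congr 1
          exact Subtype.ext (hpar.symm.trans hpar')
        · exact absurd hb'' (by simp)
      · rcases hb with ⟨a'', b'', ha'', hb'', hbρ', hpar'⟩ | ⟨a'', e'', ha'', hb'', he''⟩
        · exact absurd hb''.symm (by simp)
        · obtain rfl : e = e'' := by
            rwa [Sum.inr.injEq] at hb''
          rw [ha'']
          congr 1
          exact Subtype.ext (ha.trans he''.symm)
    -- acyclicity
    have hacyc : ∀ a : W₀, ¬ Relation.TransGen N₀ a a := by
      have hstep : ∀ a b : W₀, N₀ a b →
          (Sum.elim (fun a : ↥S => tdDep hT ρ a.1)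
            (fun e : ↥H.edgeSet => tdDep hT ρ (i e) + 1)) a <
          (Sum.elim (fun a : ↥S => tdDep hT ρ a.1)
            (fun e : ↥H.edgeSet => tdDep hT ρ (i e) + 1)) b := by
        rintro a b (⟨a', b', rfl, rfl, hbρ, hpar⟩ | ⟨a', e, rfl, rfl, ha⟩)
        · simp only [Sum.elim_inl]
          have := tdDep_par hT ρ hbρ
          rw [hpar] at this
          omega
        · simp only [Sum.elim_inl, Sum.elim_inr, ha]
          omega
      intro a ha
      have : ∀ b, Relation.TransGen N₀ a b →
          (Sum.elim (fun a : ↥S => tdDep hT ρ a.1)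
            (fun e : ↥H.edgeSet => tdDep hT ρ (i e) + 1)) a <
          (Sum.elim (fun a : ↥S => tdDep hT ρ a.1)
            (fun e : ↥H.edgeSet => tdDep hT ρ (i e) + 1)) b := by
        intro b hb
        induction hb with
        | single h => exact hstep _ _ h
        | tail _ h ih => exact lt_trans ih (hstep _ _ h)
      exact absurd (this a ha) (lt_irrefl _)
    -- leaves are sinks
    have hsink1 : ∀ e : ↥H.edgeSet, IsSink N₀ (Sum.inr e) := by
      rintro e w (⟨a', b', ha, _⟩ | ⟨a', e', ha, _⟩) <;> exact absurd ha (by simp)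
    -- all sinks are leaves
    have hsink2 : ∀ w : W₀, IsSink N₀ w → ∃ e : ↥H.edgeSet, Sum.inr e = w := by
      rintro (a | e) hw
      · exfalso
        obtain ⟨e, hx⟩ := a.2
        rcases tdM hT ρ (tdDep hT ρ (i e)) (i e) le_rfl a.1 hx with h1 | ⟨c, hc, hcρ, hcp⟩
        · exact hw (Sum.inr e) (Or.inr ⟨a, e, rfl, rfl, h1⟩)
        · exact hw (Sum.inl ⟨c, ⟨e, hc⟩⟩) (Or.inl ⟨a, ⟨c, ⟨e, hc⟩⟩, rfl, rfl, hcρ, hcp⟩)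
      · exact ⟨e, rfl⟩
    -- width bound
    have hwidth₀ : ∀ w : W₀, (F₀ w).ncard ≤ k' + 1 := by
      rintro (a | e)
      · exact hwidth _
      · obtain ⟨u, v, hee, hadj⟩ := hrep e
        have : F₀ (Sum.inr e) = {u, v} := by
          simp only [hF₀def, Sum.elim_inr, hee]
          ext x
          simp [Sym2.mem_iff]
        rw [this, Set.ncard_pair hadj.ne]
        exact h2k
    -- connectivity of the gene sets
    have hroot₀ : ∀ g : VH, RootedOn N₀ {w : W₀ | g ∈ F₀ w} := by
      intro g ⟨w₀, hw₀⟩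
      have hCgS : ∃ x, x ∈ S ∧ g ∈ Xb x := by
        rcases w₀ with a | e
        · exact ⟨a.1, a.2, hw₀⟩
        · exact ⟨i e, hiS e, hi e g hw₀⟩
      set CgS : Set I := {x | x ∈ S ∧ g ∈ Xb x} with hCgSdef
      have hne : (tdDep hT ρ '' CgS).Nonempty := ⟨_, ⟨_, hCgS.choose_spec, rfl⟩⟩
      obtain ⟨r, hrC, hrd⟩ := Nat.sInf_mem hne
      have hmin : ∀ x ∈ CgS, tdDep hT ρ r ≤ tdDep hT ρ x := by
        intro x hx
        rw [hrd]
        exact Nat.sInf_le ⟨x, hx, rfl⟩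
      have hstep : ∀ x ∈ CgS, x ≠ r → x ≠ ρ ∧ tdPar hT ρ x ∈ CgS := by
        intro x hx hxr
        have hxnot : x ∉ (tdP hT ρ r).support := by
          intro hmem
          exact absurd (tdMono hT ρ hmem hxr) (not_lt.mpr (hmin x hx))
        obtain ⟨w⟩ := hconn g ⟨x, hx.2⟩ ⟨r, hrC.2⟩
        obtain ⟨q, hq⟩ := walk_in_set w
        obtain ⟨hxρ, hparC⟩ := tdK hT ρ {j | g ∈ Xb j} r q.length q le_rfl hq hxnot
        exact ⟨hxρ, hSpar x hx.1 hxρ, hparC⟩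
      have hchain := tdChain hT ρ CgS r hstep
      refine ⟨Sum.inl ⟨r, hrC.1⟩, hrC.2, ?_⟩
      have hlift : ∀ x (hx : x ∈ CgS),
          Relation.ReflTransGen
            (fun a b => N₀ a b ∧ a ∈ {w : W₀ | g ∈ F₀ w} ∧ b ∈ {w : W₀ | g ∈ F₀ w})
            (Sum.inl ⟨r, hrC.1⟩) (Sum.inl ⟨x, hx.1⟩) := by
        intro x hx
        have hf := Relation.ReflTransGen.lift
          (p := fun a b => N₀ a b ∧ a ∈ {w : W₀ | g ∈ F₀ w} ∧ b ∈ {w : W₀ | g ∈ F₀ w})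
          (f := fun a : I => if h : a ∈ CgS then (Sum.inl ⟨a, h.1⟩ : W₀)
            else Sum.inl ⟨r, hrC.1⟩)
          (h := by
            rintro a b ⟨⟨hbρ, hpar⟩, haC, hbC⟩
            simp only [Function.onFun, dif_pos haC, dif_pos hbC]
            exact ⟨Or.inl ⟨⟨a, haC.1⟩, ⟨b, hbC.1⟩, rfl, rfl, hbρ, hpar⟩, haC.2, hbC.2⟩)
          _ _ (hchain x hx)
        simp only [Function.onFun, dif_pos hrC, dif_pos hx] at hf
        exact hf
      rintro (a | e) hx
      · have := hlift a.1 ⟨a.2, hx⟩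
        exact this
      · have hie : i e ∈ CgS := ⟨hiS e, hi e g hx⟩
        refine Relation.ReflTransGen.tail (hlift (i e) hie) ?_
        exact ⟨Or.inr ⟨⟨i e, hiS e⟩, e, rfl, rfl, rfl⟩, hie.2, hx⟩
    -- transport to a small type
    have hSfin : S.Finite := by
      have hsub : S ⊆ ⋃ (e : ↥H.edgeSet), {x | x ∈ (tdP hT ρ (i e)).support} := by
        rintro x ⟨e, hx⟩
        exact Set.mem_iUnion.mpr ⟨e, hx⟩
      exact Set.Finite.subset (Set.finite_iUnion fun e => (tdP hT ρ (i e)).support.finite_toSet) hsub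
    haveI : Finite ↥S := hSfin.to_subtype
    haveI : Finite W₀ := by
      rw [hW₀def]
      infer_instance
    haveI : Fintype W₀ := Fintype.ofFinite _
    set φ : W₀ ≃ Fin (Fintype.card W₀) := Fintype.equivFin W₀ with hφdef
    refine ⟨Fin (Fintype.card W₀), fun a b => N₀ (φ.symm a) (φ.symm b),
      fun w => F₀ (φ.symm w), fun e => φ (Sum.inr e),
      ⟨⟨φ root, ?_⟩, ?_, ?_⟩, ?_, ?_, ?_, ?_, ?_, ?_⟩
    · intro v
      have hf := Relation.ReflTransGen.lift
        (p := fun a b => N₀ (φ.symm a) (φ.symm b)) (f := φ)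
        (h := by
          intro a b hab
          show N₀ (φ.symm (φ a)) (φ.symm (φ b))
          rwa [Equiv.symm_apply_apply, Equiv.symm_apply_apply]) _ _ (hreach (φ.symm v))
      rwa [Function.onFun, Equiv.apply_symm_apply] at hf
    · intro a b c ha hb
      exact φ.symm.injective (huniq _ _ _ ha hb)
    · intro a ha
      refine hacyc (φ.symm a) ?_
      exact Relation.TransGen.lift φ.symm (fun x y h => h) _ _ ha
    · intro e1 e2 h
      have := φ.injective h
      rwa [Sum.inr.injEq] at this
    · intro e w harc
      simp only [Equiv.symm_apply_apply] at harc
      exact hsink1 e _ harc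
    · intro w hw
      have hs : IsSink N₀ (φ.symm w) := by
        intro w' h'
        refine hw (φ w') ?_
        show N₀ (φ.symm w) (φ.symm (φ w'))
        rwa [Equiv.symm_apply_apply]
      obtain ⟨e, he⟩ := hsink2 _ hs
      exact ⟨e, by show φ (Sum.inr e) = w; rw [he, Equiv.apply_symm_apply]⟩
    · intro e
      show F₀ (φ.symm (φ (Sum.inr e))) = _
      rw [Equiv.symm_apply_apply]
      rfl
    · intro w
      exact hwidth₀ _
    · intro g ⟨w, hw⟩
      obtain ⟨r₀, hr₀, hreach'⟩ := hroot₀ g ⟨φ.symm w, hw⟩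
      refine ⟨φ r₀, by show g ∈ F₀ (φ.symm (φ r₀)); rwa [Equiv.symm_apply_apply], ?_⟩
      intro x hx
      have hf := Relation.ReflTransGen.lift
        (p := fun a b => N₀ (φ.symm a) (φ.symm b) ∧ g ∈ F₀ (φ.symm a) ∧ g ∈ F₀ (φ.symm b))
        (f := φ)
        (h := by
          rintro a b ⟨hab, haM, hbM⟩
          refine ⟨?_, ?_, ?_⟩
          · rwa [Equiv.symm_apply_apply, Equiv.symm_apply_apply]
          · rwa [Equiv.symm_apply_apply]
          · rwa [Equiv.symm_apply_apply])
        _ _ (hreach' (φ.symm x) hx)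
      rwa [Function.onFun, Equiv.apply_symm_apply] at hf
end

section
/- A finite undirected graph H has treewidth at most k − 1 if and only if (taking 𝒳 = E_H, 𝒢 = V_H, and G(e) = {u,v} for each edge e = {u,v}) there exists a tree N with leaf set 𝒳 admitting a (G,k)-gene labelling: a map F on vertices of N with F(e) = G(e) for leaves e, |F(w)| ≤ k for all w, and, for each g ∈ V_H, {w : g ∈ F(w)} connected in N. -/
namespace Stmt8Aux

/-- reach in exactly n steps -/
def reachN {V : Type*} (A : V → V → Prop) : ℕ → V → V → Prop
  | 0, a, b => a = b
  | n+1, a, b => ∃ c, reachN A n a c ∧ A c b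

lemma reachN_of_rtg {V : Type*} {A : V → V → Prop} {a b : V}
    (h : Relation.ReflTransGen A a b) : ∃ n, reachN A n a b := by
  induction h with
  | refl => exact ⟨0, rfl⟩
  | tail _ hbc ih => obtain ⟨n, hn⟩ := ih; exact ⟨n + 1, _, hn, hbc⟩

lemma exists_last_edge {V : Type*} {G : SimpleGraph V} :
    ∀ {y x : V} (q : G.Walk y x), y ≠ x → ∃ z, s(z, x) ∈ q.edges := by
  intro y x q
  induction q with
  | nil => intro h; exact absurd rfl h
  | @cons a c x h q ih =>
    intro _
    by_cases hcx : c = x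
    · subst hcx; exact ⟨a, by simp⟩
    · obtain ⟨z, hz⟩ := ih hcx
      exact ⟨z, by simp [hz]⟩

lemma concat_isPath {V : Type*} {G : SimpleGraph V} {u v w : V} (p : G.Walk u v)
    (h : G.Adj v w) (hp : p.IsPath) (hw : w ∉ p.support) : (p.concat h).IsPath := by
  rw [← SimpleGraph.Walk.isPath_reverse_iff, SimpleGraph.Walk.reverse_concat,
    SimpleGraph.Walk.cons_isPath_iff, SimpleGraph.Walk.isPath_reverse_iff,
    SimpleGraph.Walk.support_reverse]
  exact ⟨hp, by simpa using hw⟩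

theorem fromRel_isTree {V : Type*} {A : V → V → Prop} (hT : IsRootedTree A) :
    (SimpleGraph.fromRel A).IsTree := by
  classical
  obtain ⟨⟨ρ, hρ⟩, huniq, hacyc⟩ := hT
  have hne : ∀ {a b : V}, A a b → a ≠ b := fun h heq =>
    hacyc _ (heq ▸ Relation.TransGen.single h)
  have hρin : ∀ a, ¬ A a ρ := fun a ha =>
    hacyc ρ (Relation.TransGen.tail' (hρ a) ha)
  have hreach : ∀ v, ∃ n, reachN A n ρ v := fun v => reachN_of_rtg (hρ v)
  set d : V → ℕ := fun v => Nat.find (hreach v) with hd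
  have hd1 : ∀ v, reachN A (d v) ρ v := fun v => Nat.find_spec (hreach v)
  have hstep : ∀ {a b : V}, A a b → d b = d a + 1 := by
    intro a b hab
    have h1 : d b ≤ d a + 1 := Nat.find_le ⟨a, hd1 a, hab⟩
    rcases hdb : d b with _ | m
    · exact absurd ((hdb ▸ hd1 b : reachN A 0 ρ b).symm ▸ hab) (hρin a)
    · have := hdb ▸ hd1 b
      obtain ⟨c, hc, hcb⟩ := this
      have : c = a := huniq c a b hcb hab
      subst this
      have h2 : d c ≤ m := Nat.find_le hc
      omega
  constructor
  · rw [SimpleGraph.connected_iff]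
    refine ⟨?_, ⟨ρ⟩⟩
    intro x y
    have hre : ∀ v, (SimpleGraph.fromRel A).Reachable ρ v := by
      intro v
      induction hρ v with
      | refl => exact SimpleGraph.Reachable.refl ρ
      | tail _ hbc ih =>
        exact ih.trans (SimpleGraph.Adj.reachable
          ((SimpleGraph.fromRel_adj A _ _).mpr ⟨hne hbc, Or.inl hbc⟩))
    exact (hre x).symm.trans (hre y)
  · intro v c hc
    obtain ⟨x, hxmem, hxmax⟩ := c.support.toFinset.exists_max_image d
      ⟨v, by simp [SimpleGraph.Walk.start_mem_support]⟩
    rw [List.mem_toFinset] at hxmem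
    have hmax : ∀ u ∈ c.support, d u ≤ d x := fun u hu => hxmax u (by simpa using hu)
    have key : ∀ (w : (SimpleGraph.fromRel A).Walk x x), w.IsCycle →
        (∀ u ∈ w.support, d u ≤ d x) → False := by
      intro w hw hwmax
      cases w with
      | nil => exact hw.ne_nil rfl
      | @cons _ y _ h1 q =>
        have hyx : y ≠ x := h1.ne'
        obtain ⟨z, hz⟩ := exists_last_edge q hyx
        have hzadj : (SimpleGraph.fromRel A).Adj z x := q.adj_of_mem_edges hz
        have hzsup : z ∈ q.support := q.fst_mem_support_of_mem_edges hz
        have hymem : y ∈ (SimpleGraph.Walk.cons h1 q).support := by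
          simp [SimpleGraph.Walk.support_cons, q.start_mem_support]
        have hzmem : z ∈ (SimpleGraph.Walk.cons h1 q).support := by
          simp [SimpleGraph.Walk.support_cons, hzsup]
        rw [SimpleGraph.fromRel_adj] at h1 hzadj
        have hAyx : A y x := by
          rcases h1.2 with h | h
          · have := hstep h; have := hwmax y hymem; omega
          · exact h
        have hAzx : A z x := by
          rcases hzadj.2 with h | h
          · exact h
          · have := hstep h; have := hwmax z hzmem; omega
        have hyz : y = z := huniq y z x hAyx hAzx
        have htrail := hw.isCircuit.isTrail
        rw [SimpleGraph.Walk.isTrail_cons] at htrail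
        apply htrail.2
        rw [show s(x, y) = s(z, x) by rw [hyz, Sym2.eq_swap]]
        exact hz
    apply key (c.rotate x hxmem) (hc.rotate hxmem)
    intro u hu
    apply hmax
    have hrot := SimpleGraph.Walk.support_rotate c x hxmem
    rw [SimpleGraph.Walk.support_eq_cons, List.mem_cons] at hu
    rcases hu with hu | hu
    · subst hu; exact hxmem
    · have : u ∈ c.support.tail := (hrot.mem_iff).mp hu
      rw [SimpleGraph.Walk.support_eq_cons c]
      exact List.mem_cons_of_mem _ this


open SimpleGraph Walk

variable {I : Type*} {T : SimpleGraph I}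

/-- On a shortest walk from ρ, a support vertex with max distance is the endpoint. -/
lemma eq_end_of_dist {ρ a b : I} {p : T.Walk ρ a} (hp : p.length = T.dist ρ a)
    (hb : b ∈ p.support) (hdb : T.dist ρ a ≤ T.dist ρ b) : b = a := by
  classical
  have ht : T.dist ρ b ≤ (p.takeUntil b hb).length := dist_le _
  have hsum := congr_arg Walk.length (p.take_spec hb)
  rw [length_append] at hsum
  have h0 : (p.dropUntil b hb).length = 0 := by omega
  exact eq_of_length_eq_zero h0

lemma concat_path_of_lt {ρ a c : I} {p : T.Walk ρ a} (hp : p.IsPath)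
    (hlen : p.length = T.dist ρ a) (h : T.Adj a c) (hd : T.dist ρ a < T.dist ρ c) :
    (p.concat h).IsPath := by
  apply concat_isPath p h hp
  intro hc
  classical
  have : T.dist ρ c ≤ (p.takeUntil c hc).length := dist_le _
  have := (length_takeUntil_le p hc)
  omega

lemma parent_unique (hT : T.IsTree) (ρ : I) {a b c : I} (hac : T.Adj a c) (hbc : T.Adj b c)
    (hda : T.dist ρ a + 1 = T.dist ρ c) (hdb : T.dist ρ b + 1 = T.dist ρ c) : a = b := by
  classical
  obtain ⟨pa0, hpa0, hla0⟩ := hT.isConnected.exists_path_of_dist ρ a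
  obtain ⟨pb0, hpb0, hlb0⟩ := hT.isConnected.exists_path_of_dist ρ b
  have hpa : (pa0.concat hac).IsPath := concat_path_of_lt hpa0 hla0 hac (by omega)
  have hpb : (pb0.concat hbc).IsPath := concat_path_of_lt hpb0 hlb0 hbc (by omega)
  have huniq := hT.existsUnique_path ρ c
  have heq : pa0.concat hac = pb0.concat hbc :=
    (huniq.unique hpa hpb)
  by_contra hab
  have haa : a ∈ (pa0.concat hac).support := by
    rw [support_concat]
    simp [List.concat_eq_append, pa0.end_mem_support]
  rw [heq, support_concat] at haa
  rw [List.mem_append] at haa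
  rcases haa with haa | haa
  · exact hab (eq_end_of_dist hlb0 haa (by omega))
  · exact hac.ne (by simpa using haa)

lemma adj_dist_cases (hT : T.IsTree) (ρ : I) {a b : I} (h : T.Adj a b) :
    T.dist ρ a + 1 = T.dist ρ b ∨ T.dist ρ b + 1 = T.dist ρ a := by
  classical
  obtain ⟨pa0, hpa0, hla0⟩ := hT.isConnected.exists_path_of_dist ρ a
  obtain ⟨pb0, hpb0, hlb0⟩ := hT.isConnected.exists_path_of_dist ρ b
  have h1 : T.dist ρ b ≤ T.dist ρ a + 1 := by
    have := dist_le (pa0.concat h); rw [length_concat] at this; omega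
  have h2 : T.dist ρ a ≤ T.dist ρ b + 1 := by
    have := dist_le (pb0.concat h.symm); rw [length_concat] at this; omega
  have hne : T.dist ρ a ≠ T.dist ρ b := by
    intro heq
    have hbs : b ∉ pa0.support := fun hb => h.ne (eq_end_of_dist hla0 hb (by omega)).symm
    have hpa : (pa0.concat h).IsPath := concat_isPath pa0 h hpa0 hbs
    have := hT.existsUnique_path ρ b
    have heq2 : pa0.concat h = pb0 := this.unique hpa hpb0
    have := congr_arg Walk.length heq2
    rw [length_concat] at this
    omega
  omega

lemma exists_parent (hT : T.IsTree) (ρ : I) {i : I} (hi : 0 < T.dist ρ i) :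
    ∃ j, T.Adj j i ∧ T.dist ρ j + 1 = T.dist ρ i := by
  obtain ⟨p, hlp⟩ := hT.isConnected.exists_walk_length_eq_dist ρ i
  have hnil : ¬ p.reverse.Nil := by
    rw [nil_iff_length_eq, length_reverse]; omega
  obtain ⟨j, hadj, q, hq⟩ := not_nil_iff.mp hnil
  have hlq : q.length = p.length - 1 := by
    have := congr_arg Walk.length hq
    rw [length_reverse, length_cons] at this; omega
  have hdj : T.dist ρ j ≤ p.length - 1 := by
    have := dist_le q.reverse
    rw [length_reverse, hlq] at this
    rw [dist_comm] at this ⊢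
    omega
  refine ⟨j, hadj.symm, ?_⟩
  have : T.dist ρ i ≤ T.dist ρ j + 1 := by
    obtain ⟨pj, hpj⟩ := hT.isConnected.exists_walk_length_eq_dist ρ j
    have := dist_le (pj.concat hadj.symm)
    rw [length_concat] at this; omega
  omega

end Stmt8Aux

theorem backward {VH : Type*} [Fintype VH] (H : SimpleGraph VH) (k : ℕ) (hk : 0 < k)
    (h : ∃ (W : Type) (N : W → W → Prop) (F : W → Set VH) (leaf : H.edgeSet → W),
      IsRootedTree N ∧
      Function.Injective leaf ∧
      (∀ e : H.edgeSet, IsSink N (leaf e)) ∧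
      (∀ w : W, IsSink N w → ∃ e : H.edgeSet, leaf e = w) ∧
      (∀ e : H.edgeSet, F (leaf e) = {v : VH | v ∈ (e : Sym2 VH)}) ∧
      (∀ w : W, (F w).ncard ≤ k) ∧
      (∀ g : VH, RootedOn N {w | g ∈ F w})) :
    (∃ (I : Type) (T : SimpleGraph I) (Xb : I → Set VH),
      T.IsTree ∧
      (∀ v : VH, ∃ i, v ∈ Xb i) ∧
      (∀ u v : VH, H.Adj u v → ∃ i, u ∈ Xb i ∧ v ∈ Xb i) ∧
      (∀ v : VH, (T.induce {i | v ∈ Xb i}).Preconnected) ∧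
      (∀ i, (Xb i).ncard ≤ k)) := by
  classical
  obtain ⟨W, N, F, leaf, hRT, hinj, hsink, hsinkonly, hF, hcard, hroot⟩ := h
  obtain ⟨⟨ρ, hρ⟩, huniq, hacyc⟩ := hRT
  have hne : ∀ {a b : W}, N a b → a ≠ b := fun h heq =>
    hacyc _ (heq ▸ Relation.TransGen.single h)
  set Iso : Set VH := {v | ∀ w, v ∉ F w} with hIso
  have : Finite ↥Iso := Subtype.finite
  obtain ⟨m, ⟨ε⟩⟩ := Finite.exists_equiv_fin ↥Iso
  set N' : (W ⊕ Fin m) → (W ⊕ Fin m) → Prop := fun x y =>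
    match x, y with
    | .inl a, .inl b => N a b
    | .inl a, .inr _ => a = ρ
    | .inr _, _ => False with hN'
  have hRT' : IsRootedTree N' := by
    refine ⟨⟨Sum.inl ρ, ?_⟩, ?_, ?_⟩
    · rintro (w | j)
      · exact Relation.ReflTransGen.lift Sum.inl (fun a b h => h) _ _ (hρ w)
      · exact Relation.ReflTransGen.single rfl
    · rintro (a | a) (b | b) (c | c) h1 h2 <;>
        simp only [hN'] at h1 h2 <;> try (exact absurd h1 (by exact id)) <;> try rfl
      · exact congrArg Sum.inl (huniq a b c h1 h2)
      · exact congrArg Sum.inl (h1.trans h2.symm)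
    · have noout : ∀ (j : Fin m) x, ¬ Relation.TransGen N' (Sum.inr j) x := by
        intro j x h
        induction h with
        | single h => exact h
        | tail _ _ ih => exact ih
      have proj : ∀ (a : W) x, Relation.TransGen N' (Sum.inl a) x →
          ∀ b, x = Sum.inl b → Relation.TransGen N a b := by
        intro a x h
        induction h with
        | single h =>
          rintro b rfl
          exact Relation.TransGen.single h
        | @tail c y h step ih =>
          rintro b rfl
          cases c with
          | inl c' => exact (ih c' rfl).tail step
          | inr j => exact absurd step (by exact id)
      rintro (a | j) h
      · exact hacyc a (proj a _ h a rfl)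
      · exact noout j _ h
  set Xb : (W ⊕ Fin m) → Set VH := fun x =>
    match x with
    | .inl w => F w
    | .inr j => {((ε.symm j : ↥Iso) : VH)} with hXb
  refine ⟨W ⊕ Fin m, SimpleGraph.fromRel N', Xb, Stmt8Aux.fromRel_isTree hRT', ?_, ?_, ?_, ?_⟩
  · -- vertex cover
    intro v
    by_cases hv : ∃ w, v ∈ F w
    · obtain ⟨w, hw⟩ := hv
      exact ⟨Sum.inl w, hw⟩
    · have hvIso : v ∈ Iso := fun w hw => hv ⟨w, hw⟩
      refine ⟨Sum.inr (ε ⟨v, hvIso⟩), ?_⟩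
      simp [hXb]
  · -- edge cover
    intro u v huv
    have he : s(u, v) ∈ H.edgeSet := H.mem_edgeSet.mpr huv
    refine ⟨Sum.inl (leaf ⟨_, he⟩), ?_, ?_⟩ <;>
      · show _ ∈ F (leaf ⟨_, he⟩)
        rw [hF]
        simp
  · -- connectivity
    intro v
    by_cases hv : ∃ w, v ∈ F w
    · -- all elements of the set are inl
      have hshape : ∀ x : W ⊕ Fin m, v ∈ Xb x → ∃ w, x = Sum.inl w ∧ v ∈ F w := by
        rintro (w | j) hx
        · exact ⟨w, rfl, hx⟩
        · exfalso
          have : v = ((ε.symm j : ↥Iso) : VH) := hx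
          obtain ⟨w, hw⟩ := hv
          exact (ε.symm j).2 w (this ▸ hw)
      obtain ⟨r, hr, hrall⟩ := hroot v ⟨hv.choose, hv.choose_spec⟩
      have key : ∀ (a : W), (ha : v ∈ F a) →
          Relation.ReflTransGen (fun a b => N a b ∧ v ∈ F a ∧ v ∈ F b) r a →
          ((SimpleGraph.fromRel N').induce {i | v ∈ Xb i}).Reachable
            ⟨Sum.inl r, hr⟩ ⟨Sum.inl a, ha⟩ := by
        intro a ha hrtg
        induction hrtg with
        | refl => exact SimpleGraph.Reachable.refl _
        | @tail b c hab hbc ih =>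
          refine (ih hbc.2.1).trans (SimpleGraph.Adj.reachable ?_)
          show (SimpleGraph.fromRel N').Adj (Sum.inl b) (Sum.inl c)
          rw [SimpleGraph.fromRel_adj]
          exact ⟨fun hcon => hne hbc.1 (Sum.inl_injective hcon), Or.inl hbc.1⟩
      intro x y
      obtain ⟨wx, hwx, hvx⟩ := hshape x.1 x.2
      obtain ⟨wy, hwy, hvy⟩ := hshape y.1 y.2
      have hx : x = ⟨Sum.inl wx, hvx⟩ := Subtype.ext hwx
      have hy : y = ⟨Sum.inl wy, hvy⟩ := Subtype.ext hwy
      rw [hx, hy]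
      exact (key wx hvx (hrall wx hvx)).symm.trans (key wy hvy (hrall wy hvy))
    · -- v isolated: the set is a singleton
      have hvIso : v ∈ Iso := fun w hw => hv ⟨w, hw⟩
      have hshape : ∀ x : W ⊕ Fin m, v ∈ Xb x → x = Sum.inr (ε ⟨v, hvIso⟩) := by
        rintro (w | j) hx
        · exact absurd hx (fun h => hv ⟨w, h⟩)
        · have : v = ((ε.symm j : ↥Iso) : VH) := hx
          have : ε.symm j = ⟨v, hvIso⟩ := Subtype.ext this.symm
          rw [← this, Equiv.apply_symm_apply]
      intro x y
      have : x = y := Subtype.ext ((hshape x.1 x.2).trans (hshape y.1 y.2).symm)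
      rw [this]
  · -- sizes
    rintro (w | j)
    · exact hcard w
    · simp only [hXb, Set.ncard_singleton]
      omega
theorem forward {VH : Type*} [Fintype VH] (H : SimpleGraph VH) (k : ℕ) (hk : 0 < k)
    (h : ∃ (I : Type) (T : SimpleGraph I) (Xb : I → Set VH),
      T.IsTree ∧
      (∀ v : VH, ∃ i, v ∈ Xb i) ∧
      (∀ u v : VH, H.Adj u v → ∃ i, u ∈ Xb i ∧ v ∈ Xb i) ∧
      (∀ v : VH, (T.induce {i | v ∈ Xb i}).Preconnected) ∧
      (∀ i, (Xb i).ncard ≤ k)) :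
    (∃ (W : Type) (N : W → W → Prop) (F : W → Set VH) (leaf : H.edgeSet → W),
      IsRootedTree N ∧
      Function.Injective leaf ∧
      (∀ e : H.edgeSet, IsSink N (leaf e)) ∧
      (∀ w : W, IsSink N w → ∃ e : H.edgeSet, leaf e = w) ∧
      (∀ e : H.edgeSet, F (leaf e) = {v : VH | v ∈ (e : Sym2 VH)}) ∧
      (∀ w : W, (F w).ncard ≤ k) ∧
      (∀ g : VH, RootedOn N {w | g ∈ F w})) := by
  classical
  obtain ⟨I, T, Xb, htree, hvc, hec, hconn, hcard⟩ := h
  have : Nonempty I := htree.isConnected.nonempty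
  obtain ⟨ρ⟩ := this
  set d : I → ℕ := fun i => T.dist ρ i with hd
  have hpick : ∀ e : H.edgeSet, ∃ i, ∀ v : VH, v ∈ (e : Sym2 VH) → v ∈ Xb i := by
    rintro ⟨s, hs⟩
    induction s using Sym2.ind with
    | _ u v =>
      obtain ⟨i, hu, hv⟩ := hec u v (H.mem_edgeSet.mp hs)
      refine ⟨i, fun x hx => ?_⟩
      rcases Sym2.mem_iff.mp hx with rfl | rfl
      · exact hu
      · exact hv
  set pick : H.edgeSet → I := fun e => (hpick e).choose with hpickdef
  have hpickmem : ∀ (e : H.edgeSet) (v : VH), v ∈ (e : Sym2 VH) → v ∈ Xb (pick e) :=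
    fun e => (hpick e).choose_spec
  have : Finite H.edgeSet := by
    have : Finite VH := Finite.of_fintype VH
    have : Finite (Sym2 VH) := Quot.finite _
    exact Subtype.finite
  obtain ⟨n, ⟨ε⟩⟩ := Finite.exists_equiv_fin H.edgeSet
  set P : I → I → Prop := fun i j => T.Adj i j ∧ d i + 1 = d j with hP
  set N : ((I × ℕ) ⊕ Fin n) → ((I × ℕ) ⊕ Fin n) → Prop := fun x y =>
    match x, y with
    | .inl (i, n'), .inl (j, m') => (n' = 0 ∧ m' = 0 ∧ P i j) ∨ (j = i ∧ m' = n' + 1)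
    | .inl (i, n'), .inr f => n' = 0 ∧ i = pick (ε.symm f)
    | .inr _, _ => False with hN
  set F : ((I × ℕ) ⊕ Fin n) → Set VH := fun x =>
    match x with
    | .inl (i, 0) => Xb i
    | .inl (_, _+1) => ∅
    | .inr f => {v : VH | v ∈ ((ε.symm f : H.edgeSet) : Sym2 VH)} with hF
  refine ⟨(I × ℕ) ⊕ Fin n, N, F, fun e => Sum.inr (ε e), ?_, ?_, ?_, ?_, ?_, ?_, ?_⟩
  · -- IsRootedTree
    refine ⟨⟨Sum.inl (ρ, 0), ?_⟩, ?_, ?_⟩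
    · -- reachability
      have key : ∀ (m : ℕ) (i : I), d i = m →
          Relation.ReflTransGen N (Sum.inl (ρ, 0)) (Sum.inl (i, 0)) := by
        intro m
        induction m using Nat.strong_induction_on with
        | _ m ih =>
          intro i him
          have him' : T.dist ρ i = m := him
          rcases Nat.eq_zero_or_pos m with rfl | hpos
          · have : ρ = i := by
              have := htree.isConnected.dist_eq_zero_iff (u := ρ) (v := i)
              exact this.mp him'
            subst this
            exact Relation.ReflTransGen.refl
          · obtain ⟨j, hadj, hdj⟩ := Stmt8Aux.exists_parent htree ρ
              (by omega : 0 < T.dist ρ i)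
            have hjm : T.dist ρ j < m := by omega
            have hrec := ih (d j) hjm j rfl
            have hPji : T.dist ρ j + 1 = T.dist ρ i := hdj
            exact hrec.tail (Or.inl ⟨rfl, rfl, hadj, hPji⟩)
      have chain : ∀ (i : I) (s : ℕ),
          Relation.ReflTransGen N (Sum.inl (i, 0)) (Sum.inl (i, s)) := by
        intro i s
        induction s with
        | zero => exact Relation.ReflTransGen.refl
        | succ s ihs => exact ihs.tail (Or.inr ⟨rfl, rfl⟩)
      rintro ((⟨i, s⟩) | f)
      · exact (key (d i) i rfl).trans (chain i s)
      · exact (key (d (pick (ε.symm f))) _ rfl).tail ⟨rfl, rfl⟩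
    · -- unique parents
      rintro (⟨i, s⟩ | f) (⟨i', s'⟩ | f') (⟨j, t⟩ | g) h1 h2
      · rcases t with _ | t
        · rcases h1 with ⟨hs, -, hP1⟩ | ⟨-, habs⟩
          · rcases h2 with ⟨hs', -, hP2⟩ | ⟨-, habs⟩
            · subst hs; subst hs'
              have := Stmt8Aux.parent_unique htree ρ hP1.1 hP2.1 hP1.2 hP2.2
              rw [this]
            · exact absurd habs (by omega)
          · exact absurd habs (by omega)
        · rcases h1 with ⟨-, habs, -⟩ | ⟨hji, hts⟩
          · exact absurd habs (by omega)
          · rcases h2 with ⟨-, habs, -⟩ | ⟨hji', hts'⟩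
            · exact absurd habs (by omega)
            · subst hji; subst hji'
              have : s = s' := by omega
              rw [this]
      · rcases h1 with ⟨hs, hi⟩
        rcases h2 with ⟨hs', hi'⟩
        subst hs; subst hs'; subst hi; subst hi'; rfl
      · exact absurd h2 (fun h => h)
      · exact absurd h2 (fun h => h)
      · exact absurd h1 (fun h => h)
      · exact absurd h1 (fun h => h)
      · exact absurd h1 (fun h => h)
      · exact absurd h1 (fun h => h)
    · -- no cycles
      set φ1 : ((I × ℕ) ⊕ Fin n) → ℕ := fun x =>
        match x with
        | .inl (i, _) => d i
        | .inr f => d (pick (ε.symm f)) + 1 with hφ1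
      set φ2 : ((I × ℕ) ⊕ Fin n) → ℕ := fun x =>
        match x with
        | .inl (_, s) => s
        | .inr _ => 0 with hφ2
      have hlt : ∀ x y, N x y → φ1 x < φ1 y ∨ (φ1 x = φ1 y ∧ φ2 x < φ2 y) := by
        rintro (⟨i, s⟩ | f) (⟨j, t⟩ | g) hxy
        · rcases hxy with ⟨hs, ht, -, hdij⟩ | ⟨rfl, ht⟩
          · left; show d i < d j; omega
          · right
            refine ⟨rfl, ?_⟩
            show s < t
            omega
        · rcases hxy with ⟨hs, rfl⟩
          left
          show d (pick (ε.symm g)) < d (pick (ε.symm g)) + 1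
          omega
        · exact absurd hxy (by exact id)
        · exact absurd hxy (by exact id)
      intro a ha
      have : ∀ x y, Relation.TransGen N x y →
          φ1 x < φ1 y ∨ (φ1 x = φ1 y ∧ φ2 x < φ2 y) := by
        intro x y hxy
        induction hxy with
        | single h => exact hlt _ _ h
        | tail _ hstep ih =>
          rcases ih with h | h <;> rcases hlt _ _ hstep with h' | h' <;> omega
      rcases this a a ha with h | h <;> omega
  · -- injective
    intro e e' he
    exact ε.injective (Sum.inr_injective he)
  · -- leaves are sinks
    intro e w hw
    exact hw
  · -- sinks are leaves
    rintro (⟨i, s⟩ | f) hsink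
    · exact ((hsink (Sum.inl (i, s + 1))) (Or.inr ⟨rfl, rfl⟩)).elim
    · exact ⟨ε.symm f, by simp⟩
  · -- F on leaves
    intro e
    simp only [hF, Equiv.symm_apply_apply]
  · -- sizes
    rintro (⟨i, s⟩ | f)
    · rcases s with _ | s
      · exact hcard i
      · have hFe : F (Sum.inl (i, s + 1)) = ∅ := rfl
        rw [hFe, Set.ncard_empty]; omega
    · have hsub : {v : VH | v ∈ ((ε.symm f : H.edgeSet) : Sym2 VH)} ⊆ Xb (pick (ε.symm f)) :=
        fun v hv => hpickmem _ v hv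
      calc (F (Sum.inr f)).ncard ≤ (Xb (pick (ε.symm f))).ncard :=
            Set.ncard_le_ncard hsub (Set.toFinite _)
        _ ≤ k := hcard _
  · -- RootedOn
    intro g _
    set J : Set I := {i | g ∈ Xb i} with hJ
    obtain ⟨j1, hj1⟩ := hvc g
    have hex : ∃ m : ℕ, ∃ i ∈ J, d i = m := ⟨d j1, j1, hj1, rfl⟩
    obtain ⟨j0, hj0J, hj0d⟩ := Nat.find_spec hex
    have hmin : ∀ i ∈ J, d j0 ≤ d i := by
      intro i hi
      have h2 : Nat.find hex ≤ d i := Nat.find_le ⟨i, hi, rfl⟩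
      omega
    -- descending path lemma
    have descend : ∀ (x i : I) (p : T.Walk x i), p.IsPath →
        (∀ y ∈ p.support, y ∈ J) →
        (∀ c, T.Adj c x → d c + 1 = d x → c ∉ p.support) →
        Relation.ReflTransGen (fun a b => P a b ∧ a ∈ J ∧ b ∈ J) x i := by
      intro x i p
      induction p with
      | nil => intro _ _ _; exact Relation.ReflTransGen.refl
      | @cons x c i hadj q ih =>
        intro hp hsupJ hnopar
        have hxJ : x ∈ J := hsupJ x (SimpleGraph.Walk.start_mem_support _)
        have hcJ : c ∈ J := hsupJ c (by
          rw [SimpleGraph.Walk.support_cons]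
          exact List.mem_cons_of_mem _ q.start_mem_support)
        have hPxc : P x c := by
          rcases Stmt8Aux.adj_dist_cases htree ρ hadj with hcase | hcase
          · exact ⟨hadj, hcase⟩
          · exfalso
            apply hnopar c hadj.symm hcase
            rw [SimpleGraph.Walk.support_cons]
            exact List.mem_cons_of_mem _ q.start_mem_support
        rw [SimpleGraph.Walk.cons_isPath_iff] at hp
        refine Relation.ReflTransGen.head ⟨hPxc, hxJ, hcJ⟩ (ih hp.1 ?_ ?_)
        · intro y hy
          apply hsupJ
          rw [SimpleGraph.Walk.support_cons]
          exact List.mem_cons_of_mem _ hy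
        · intro c' hc' hdc' hc'mem
          have : c' = x := Stmt8Aux.parent_unique htree ρ hc' hPxc.1 hdc' hPxc.2
          subst this
          exact hp.2 hc'mem
    -- main claim: reach any J-element from j0
    have reachJ : ∀ i ∈ J,
        Relation.ReflTransGen (fun a b => P a b ∧ a ∈ J ∧ b ∈ J) j0 i := by
      intro i hi
      have hpre := hconn g
      have hreach := hpre ⟨j0, hj0J⟩ ⟨i, hi⟩
      obtain ⟨q0⟩ := hreach
      set q := q0.bypass with hq
      have hqpath : q.IsPath := q0.bypass_isPath
      set emb := SimpleGraph.Embedding.induce {i | g ∈ Xb i} (G := T) with hemb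
      set p := q.map emb.toHom with hp
      have hppath : p.IsPath :=
        SimpleGraph.Walk.map_isPath_of_injective Subtype.val_injective hqpath
      have hpsup : ∀ y ∈ p.support, y ∈ J := by
        intro y hy
        rw [hp, SimpleGraph.Walk.support_map, List.mem_map] at hy
        obtain ⟨a, _, rfl⟩ := hy
        exact a.2
      exact descend j0 i p hppath hpsup (by
        intro c hc hdc hcmem
        have hcJ : c ∈ J := hpsup c hcmem
        have := hmin c hcJ
        omega)
    -- lift to N
    have lift : ∀ i ∈ J,
        Relation.ReflTransGen
          (fun a b => N a b ∧ a ∈ {w | g ∈ F w} ∧ b ∈ {w | g ∈ F w})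
          (Sum.inl (j0, 0)) (Sum.inl (i, 0)) := by
      intro i hi
      refine Relation.ReflTransGen.lift (fun i => Sum.inl (i, 0)) ?_ _ _ (reachJ i hi)
      rintro a b ⟨hPab, haJ, hbJ⟩
      exact ⟨Or.inl ⟨rfl, rfl, hPab⟩, haJ, hbJ⟩
    refine ⟨Sum.inl (j0, 0), hj0J, ?_⟩
    rintro (⟨i, s⟩ | f) hx
    · rcases s with _ | s
      · exact lift i hx
      · exact absurd hx (by simp [hF])
    · have hgx : g ∈ ((ε.symm f : H.edgeSet) : Sym2 VH) := hx
      have hpf : pick (ε.symm f) ∈ J := hpickmem _ g hgx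
      exact (lift _ hpf).tail ⟨⟨rfl, rfl⟩, hpickmem _ g hgx, hx⟩

/-- A finite graph `H` has treewidth at most `k - 1` (a tree decomposition with all bags
of size at most `k`) if and only if, taking `𝒳 = E_H`, `𝒢 = V_H` and `G(e) = ` the
endpoints of `e`, there exists a tree `N` whose leaf set is in bijection with `𝒳`
admitting a `(G,k)`-gene labelling. -/
theorem stmt8 {VH : Type*} [Fintype VH] (H : SimpleGraph VH) (k : ℕ) (hk : 0 < k) :
    (∃ (I : Type) (T : SimpleGraph I) (Xb : I → Set VH),
      T.IsTree ∧
      (∀ v : VH, ∃ i, v ∈ Xb i) ∧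
      (∀ u v : VH, H.Adj u v → ∃ i, u ∈ Xb i ∧ v ∈ Xb i) ∧
      (∀ v : VH, (T.induce {i | v ∈ Xb i}).Preconnected) ∧
      (∀ i, (Xb i).ncard ≤ k)) ↔
    (∃ (W : Type) (N : W → W → Prop) (F : W → Set VH) (leaf : H.edgeSet → W),
      IsRootedTree N ∧
      Function.Injective leaf ∧
      (∀ e : H.edgeSet, IsSink N (leaf e)) ∧
      (∀ w : W, IsSink N w → ∃ e : H.edgeSet, leaf e = w) ∧
      (∀ e : H.edgeSet, F (leaf e) = {v : VH | v ∈ (e : Sym2 VH)}) ∧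
      (∀ w : W, (F w).ncard ≤ k) ∧
      (∀ g : VH, RootedOn N {w | g ∈ F w})) := by
  exact ⟨forward H k hk, backward H k hk⟩
end

section
/- Let T be a rooted phylogenetic tree on leaf set 𝒳, G : 𝒳 → Set 𝒢 a genome assignment with |G(x)| ≤ k for all x ∈ 𝒳, and k a positive integer with |𝒢| ≥ k. Then there exists a rooted acyclic digraph N obtained from T by adding at most ⌈(|𝒢| − k)/k⌉·(|𝒳| + 1) new arcs (and at most ⌈(|𝒢| − k)/k⌉ new vertices) that admits a (G,k)-gene labelling F: F(x) = G(x) for leaves x, |F(v)| ≤ k for all vertices v, and for each g ∈ 𝒢 the set {v : g ∈ F(v)} induces a rooted (hence connected) subdigraph of N. -/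
/-- auxiliary digraph -/
def Naux {V 𝒢 : Type*} [Fintype 𝒢] (T : V → V → Prop) (ρ : V) (Gm : V → Set 𝒢)
    (k f : ℕ) : (V ⊕ Fin f) → (V ⊕ Fin f) → Prop :=
  fun w₁ w₂ => match w₁, w₂ with
  | .inl a, .inl b => T a b
  | .inl a, .inr _ => a = ρ
  | .inr j, .inl b => IsSink T b ∧ ∃ g ∈ Gm b, k ≤ ((Fintype.equivFin 𝒢) g : ℕ) ∧
      (((Fintype.equivFin 𝒢) g : ℕ) - k) / k = (j : ℕ)
  | .inr _, .inr _ => False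

open Classical in
/-- auxiliary labelling -/
noncomputable def Faux {V 𝒢 : Type*} [Fintype 𝒢] (T : V → V → Prop) (Gm : V → Set 𝒢)
    (k f : ℕ) : (V ⊕ Fin f) → Set 𝒢 :=
  fun w => match w with
  | .inl v => if IsSink T v then Gm v else
      {g | ((Fintype.equivFin 𝒢) g : ℕ) < k ∧
        ∃ s, IsSink T s ∧ Relation.ReflTransGen T v s ∧ g ∈ Gm s}
  | .inr j => {g | k ≤ ((Fintype.equivFin 𝒢) g : ℕ) ∧
      (((Fintype.equivFin 𝒢) g : ℕ) - k) / k = (j : ℕ)}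

lemma aux_ncard_lt {α : Type*} (S : Set α) (φ : α → ℕ) (k : ℕ)
    (hφ : ∀ g ∈ S, φ g < k) (hinj : Set.InjOn φ S) : S.ncard ≤ k := by
  have h : S.ncard ≤ (Set.Iio k).ncard :=
    Set.ncard_le_ncard_of_injOn φ hφ hinj (Set.finite_Iio k)
  rwa [← Finset.coe_range, Set.ncard_coe_finset, Finset.card_range] at h

/-- Theorem 1(ii): given a rooted phylogenetic tree `T` with leaf set `X`, a genome
assignment `Gm` with `|Gm x| ≤ k` on leaves and `|𝒢| ≥ k > 0`, there is a rooted acyclic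
digraph `N` obtained from `T` by adding at most `f = ⌈(|𝒢|-k)/k⌉` new vertices and at most
`f·(|X|+1)` new arcs that admits a `(G,k)`-gene labelling. -/
theorem stmt12 {V 𝒢 : Type*} [Fintype V] [Fintype 𝒢]
    (T : V → V → Prop) (ρ : V)
    (hρ : ∀ v : V, Relation.ReflTransGen T ρ v)
    (hparent : ∀ a b c : V, T a c → T b c → a = b)
    (hacyc : ∀ a : V, ¬ Relation.TransGen T a a)
    (hphylo : ∃ a b : V, a ≠ b ∧ T ρ a ∧ T ρ b)
    (Gm : V → Set 𝒢) (k : ℕ) (hk : 0 < k) (hcard : k ≤ Fintype.card 𝒢)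
    (hGm : ∀ x : V, IsSink T x → (Gm x).ncard ≤ k) :
    ∃ (f : ℕ) (N : (V ⊕ Fin f) → (V ⊕ Fin f) → Prop) (F : (V ⊕ Fin f) → Set 𝒢),
      f ≤ (Fintype.card 𝒢 - k + k - 1) / k ∧
      (∀ a b : V, T a b → N (Sum.inl a) (Sum.inl b)) ∧
      ({q : (V ⊕ Fin f) × (V ⊕ Fin f) | N q.1 q.2 ∧
          ∀ a b : V, q = (Sum.inl a, Sum.inl b) → ¬ T a b}).ncard ≤
        ((Fintype.card 𝒢 - k + k - 1) / k) * ({x : V | IsSink T x}.ncard + 1) ∧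
      (∀ w : V ⊕ Fin f, Relation.ReflTransGen N (Sum.inl ρ) w) ∧
      (∀ w : V ⊕ Fin f, ¬ Relation.TransGen N w w) ∧
      (∀ x : V, IsSink T x → F (Sum.inl x) = Gm x) ∧
      (∀ w : V ⊕ Fin f, (F w).ncard ≤ k) ∧
      (∀ g : 𝒢, RootedOn N {w | g ∈ F w}) := by
  classical
  set m := Fintype.card 𝒢 with hm
  set e := Fintype.equivFin 𝒢 with he
  set idx : 𝒢 → ℕ := fun g => (e g : ℕ) with hidx
  set f := (m - k + k - 1) / k with hf
  set N := Naux T ρ Gm k f with hN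
  set F := Faux T Gm k f with hF
  -- basic facts
  have hidxinj : Function.Injective idx := fun a b h => e.injective (Fin.val_injective h)
  have hidxlt : ∀ g : 𝒢, idx g < m := fun g => (e g).isLt
  have hρns : ¬ IsSink T ρ := by
    obtain ⟨a, b, hab, h1, h2⟩ := hphylo
    exact fun h => h a h1
  have hjf : ∀ n, n < m → k ≤ n → (n - k) / k < f := by
    intro n hn hkn
    have hm1 : m - k + k - 1 = m - 1 := by omega
    have hkm : k ≤ m - 1 := by omega
    have : (m - 1) / k = (m - 1 - k) / k + 1 := by
      rw [← Nat.add_div_right _ hk]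
      congr 1
      omega
    have hle : (n - k) / k ≤ (m - 1 - k) / k := Nat.div_le_div_right (by omega)
    rw [hf, hm1, this]
    omega
  -- sink stays (for T)
  have hTsinkstay : ∀ s v : V, IsSink T s → Relation.ReflTransGen T s v → v = s := by
    intro s v hs h
    rcases Relation.ReflTransGen.cases_head h with h | ⟨c, hc, _⟩
    · exact h.symm
    · exact absurd hc (hs c)
  -- sink stays (for N)
  have hsinkstay : ∀ (s : V) (w : V ⊕ Fin f), IsSink T s →
      Relation.ReflTransGen N (Sum.inl s) w → w = Sum.inl s := by
    intro s w hs h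
    rcases Relation.ReflTransGen.cases_head h with h | ⟨c, hc, _⟩
    · exact h.symm
    · exfalso
      match c, hc with
      | .inl b, hc => exact hs b hc
      | .inr j, hc => exact hρns (hc ▸ hs)
  have hinrstay : ∀ (j : Fin f) (w : V ⊕ Fin f),
      Relation.ReflTransGen N (Sum.inr j) w →
      w = Sum.inr j ∨ ∃ s : V, IsSink T s ∧ w = Sum.inl s := by
    intro j w h
    rcases Relation.ReflTransGen.cases_head h with h | ⟨c, hc, h'⟩
    · exact Or.inl h.symm
    · match c, hc with
      | .inl b, hc => exact Or.inr ⟨b, hc.1, hsinkstay b w hc.1 h'⟩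
      | .inr j', hc => exact absurd hc id
  -- N-paths between inl vertices with non-sink target come from T-paths
  have hinl : ∀ (b : V), ¬ IsSink T b → ∀ (w : V ⊕ Fin f),
      Relation.ReflTransGen N w (Sum.inl b) →
      ∀ a : V, w = Sum.inl a → Relation.ReflTransGen T a b := by
    intro b hb w h
    induction h using Relation.ReflTransGen.head_induction_on with
    | refl => intro a ha; cases ha; exact Relation.ReflTransGen.refl
    | head hstep hrest ih =>
      rename_i w c
      intro a ha
      subst ha
      match c, hstep with
      | .inl c', hstep =>
        exact Relation.ReflTransGen.head hstep (ih c' rfl)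
      | .inr j, hstep =>
        rcases hinrstay j _ hrest with h | ⟨s, hs, h⟩
        · exact absurd h (by simp)
        · rw [Sum.inl.injEq] at h
          exact absurd (h ▸ hb) (fun hh => hh hs)
  refine ⟨f, N, F, le_refl _, ?_, ?_, ?_, ?_, ?_, ?_, ?_⟩
  · -- T arcs are in N
    intro a b h
    exact h
  · -- extra arc count
    set E := {q : (V ⊕ Fin f) × (V ⊕ Fin f) | N q.1 q.2 ∧
        ∀ a b : V, q = (Sum.inl a, Sum.inl b) → ¬ T a b} with hE
    set h : Fin f × Option {x // IsSink T x} → (V ⊕ Fin f) × (V ⊕ Fin f) :=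
      fun p => match p with
      | (j, none) => (Sum.inl ρ, Sum.inr j)
      | (j, some s) => (Sum.inr j, Sum.inl s.1) with hh
    have hsub : E ⊆ Set.range h := by
      rintro ⟨w₁, w₂⟩ ⟨hNq, hq⟩
      match w₁, w₂, hNq, hq with
      | .inl a, .inl b, hNq, hq => exact absurd hNq (hq a b rfl)
      | .inl a, .inr j, hNq, hq =>
        exact ⟨(j, none), by simp [hh, show a = ρ from hNq]⟩
      | .inr j, .inl b, hNq, hq =>
        exact ⟨(j, some ⟨b, hNq.1⟩), by simp [hh]⟩
    have h1 : E.ncard ≤ (Set.range h).ncard :=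
      Set.ncard_le_ncard hsub (Set.finite_range h)
    have h2 : (Set.range h).ncard ≤ Nat.card (Fin f × Option {x // IsSink T x}) := by
      rw [← Set.ncard_univ, ← Set.image_univ]
      exact Set.ncard_image_le Set.finite_univ
    have h3 : Nat.card (Fin f × Option {x // IsSink T x}) =
        f * ({x : V | IsSink T x}.ncard + 1) := by
      rw [Nat.card_prod, Nat.card_eq_fintype_card, Nat.card_eq_fintype_card,
        Fintype.card_fin, Fintype.card_option]
      congr 1
      rw [← Nat.card_coe_set_eq, Nat.card_eq_fintype_card]
      rfl
    calc E.ncard ≤ Nat.card (Fin f × Option {x // IsSink T x}) := le_trans h1 h2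
      _ = f * ({x : V | IsSink T x}.ncard + 1) := h3
      _ = ((Fintype.card 𝒢 - k + k - 1) / k) * ({x : V | IsSink T x}.ncard + 1) := by rw [hf]
  · -- reachability from root
    intro w
    match w with
    | .inl v =>
      exact Relation.ReflTransGen.lift Sum.inl (fun a b hab => hab) _ _ (hρ v)
    | .inr j =>
      exact Relation.ReflTransGen.single rfl
  · -- acyclicity
    intro w hw
    obtain ⟨c, hstep, hrest⟩ := Relation.TransGen.head'_iff.mp hw
    match w, c, hstep with
    | .inl a, .inl b, hstep =>
      have hans : ¬ IsSink T a := fun h => h b hstep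
      have : Relation.ReflTransGen T b a := hinl a hans _ hrest b rfl
      exact hacyc a (Relation.TransGen.head' hstep this)
    | .inl a, .inr j, hstep =>
      rcases hinrstay j _ hrest with h | ⟨s, hs, h⟩
      · exact absurd h (by simp)
      · rw [Sum.inl.injEq] at h
        apply hρns
        rw [← hstep, h]
        exact hs
    | .inr j, .inl b, hstep =>
      have := hsinkstay b _ hstep.1 hrest
      exact absurd this (by simp)
  · -- leaves keep their genomes
    intro x hx
    show Faux T Gm k f (Sum.inl x) = Gm x
    simp [Faux, hx]
  · -- capacity
    intro w
    match w with
    | .inl v =>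
      by_cases hv : IsSink T v
      · have : F (Sum.inl v) = Gm v := by show Faux T Gm k f _ = _; simp [Faux, hv]
        rw [this]; exact hGm v hv
      · have : F (Sum.inl v) = {g | idx g < k ∧
            ∃ s, IsSink T s ∧ Relation.ReflTransGen T v s ∧ g ∈ Gm s} := by
          show Faux T Gm k f _ = _; simp [Faux, hv, hidx, he]
        rw [this]
        exact aux_ncard_lt _ idx k (fun g hg => hg.1)
          (fun a _ b _ hab => hidxinj hab)
    | .inr j =>
      have : F (Sum.inr j) = {g | k ≤ idx g ∧ (idx g - k) / k = (j : ℕ)} := rfl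
      rw [this]
      refine aux_ncard_lt _ (fun g => (idx g - k) % k) k
        (fun g _ => Nat.mod_lt _ hk) ?_
      rintro a ⟨ha1, ha2⟩ b ⟨hb1, hb2⟩ hab
      apply hidxinj
      have h1 := Nat.div_add_mod (idx a - k) k
      have h2 := Nat.div_add_mod (idx b - k) k
      have hdd : (idx a - k) / k = (idx b - k) / k := by rw [ha2, hb2]
      simp only at hab
      rw [hdd, hab] at h1
      generalize k * ((idx b - k) / k) = P at h1 h2
      generalize (idx b - k) % k = Q at h1 h2
      omega
  · -- gene connectivity
    intro g
    set S := {w : V ⊕ Fin f | g ∈ F w} with hS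
    by_cases hg : idx g < k
    · -- gene handled along the tree
      intro hSne
      -- membership characterization
      have hmem : ∀ v : V, (∃ s, IsSink T s ∧ Relation.ReflTransGen T v s ∧ g ∈ Gm s) →
          Sum.inl v ∈ S := by
        rintro v ⟨s, hs, hvs, hgs⟩
        by_cases hv : IsSink T v
        · have hsv : s = v := hTsinkstay v s hv hvs
          show g ∈ Faux T Gm k f (Sum.inl v)
          simp only [Faux]
          rw [if_pos hv]
          exact hsv ▸ hgs
        · show g ∈ Faux T Gm k f (Sum.inl v)
          simp only [Faux, if_neg hv, Set.mem_setOf_eq]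
          exact ⟨hg, s, hs, hvs, hgs⟩
      have hmem' : ∀ v : V, Sum.inl v ∈ S →
          ∃ s, IsSink T s ∧ Relation.ReflTransGen T v s ∧ g ∈ Gm s := by
        intro v hv
        by_cases hvs : IsSink T v
        · have : g ∈ Gm v := by
            have := hv
            simpa [hS, hF, Faux, hvs] using this
          exact ⟨v, hvs, Relation.ReflTransGen.refl, this⟩
        · have := hv
          simp only [hS, hF, Faux, Set.mem_setOf_eq, if_neg hvs] at this
          exact this.2
      have hnotinr : ∀ j : Fin f, Sum.inr j ∉ S := by
        intro j hj
        have : k ≤ idx g := hj.1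
        omega
      have hρmem : Sum.inl ρ ∈ S := by
        obtain ⟨w, hw⟩ := hSne
        match w, hw with
        | .inl v, hw =>
          obtain ⟨s, hs, hvs, hgs⟩ := hmem' v hw
          exact hmem ρ ⟨s, hs, (hρ v).trans hvs, hgs⟩
        | .inr j, hw => exact absurd hw (hnotinr j)
      refine ⟨Sum.inl ρ, hρmem, ?_⟩
      -- restricted path along the tree
      have hpath : ∀ (b : V), (∃ s, IsSink T s ∧ Relation.ReflTransGen T b s ∧ g ∈ Gm s) →
          ∀ a : V, Relation.ReflTransGen T a b →
          Relation.ReflTransGen (fun x y => N x y ∧ x ∈ S ∧ y ∈ S)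
            (Sum.inl a) (Sum.inl b) := by
        intro b hb a hab
        induction hab using Relation.ReflTransGen.head_induction_on with
        | refl => exact Relation.ReflTransGen.refl
        | head hstep hrest ih =>
          rename_i a c
          obtain ⟨s, hs, hbs, hgs⟩ := hb
          have ha : ∃ s, IsSink T s ∧ Relation.ReflTransGen T a s ∧ g ∈ Gm s :=
            ⟨s, hs, (Relation.ReflTransGen.head hstep hrest).trans hbs, hgs⟩
          have hc : ∃ s, IsSink T s ∧ Relation.ReflTransGen T c s ∧ g ∈ Gm s :=
            ⟨s, hs, hrest.trans hbs, hgs⟩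
          exact Relation.ReflTransGen.head
            ⟨show N (Sum.inl a) (Sum.inl c) from hstep, hmem a ha, hmem c hc⟩ ih
      intro x hx
      match x, hx with
      | .inl v, hx =>
        obtain ⟨s, hs, hvs, hgs⟩ := hmem' v hx
        exact hpath v ⟨s, hs, hvs, hgs⟩ ρ (hρ v)
      | .inr j, hx => exact absurd hx (hnotinr j)
    · -- gene handled by a new vertex
      push_neg at hg
      intro _
      have hj : (idx g - k) / k < f := hjf (idx g) (hidxlt g) hg
      set j : Fin f := ⟨(idx g - k) / k, hj⟩ with hjdef
      have hjmem : Sum.inr j ∈ S := ⟨hg, rfl⟩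
      refine ⟨Sum.inr j, hjmem, ?_⟩
      intro x hx
      match x, hx with
      | .inl v, hx =>
        by_cases hvs : IsSink T v
        · have hgv : g ∈ Gm v := by simpa [hS, hF, Faux, hvs] using hx
          refine Relation.ReflTransGen.single ⟨⟨hvs, g, hgv, hg, rfl⟩, hjmem, hx⟩
        · exfalso
          have := hx
          simp only [hS, hF, Faux, Set.mem_setOf_eq, if_neg hvs] at this
          exact absurd this.1 (not_lt.mpr hg)
      | .inr j', hx =>
        have h2 : (idx g - k) / k = (j' : ℕ) := hx.2
        have : j' = j := Fin.ext h2.symm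
        rw [this]
end

section
/- Let T be a finite rooted tree, let x₁, x₂ be leaves with lowest common ancestor v, and let N be a digraph obtained from a subdivision T' of T by adding a set A of extra arcs ('lgt-arcs'). Suppose there is an undirected path in N from x₁ to x₂ that avoids v and consists of two directed paths, one ending at x₁ and one ending at x₂. Then either some single lgt-arc (a,d) has lca_{T'}(a,d) = v, or there exist two lgt-arcs (a,b), (c,d) used by the path such that v is the lowest common ancestor in T' of the tail of one and the head of the other, or of the two heads. -/
/-- The arc `(x,y)` is traversed by the walk recorded in the list `l`. -/
def UsedIn {V : Type*} (l : List V) (x y : V) : Prop :=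
  ∃ i : ℕ, l[i]? = some x ∧ l[i + 1]? = some y


open Relation
section
variable {W : Type*} {T' : W → W → Prop}

lemma rt_antisymm (hac : ∀ a : W, ¬ TransGen T' a a) {a b : W}
    (h1 : ReflTransGen T' a b) (h2 : ReflTransGen T' b a) : a = b := by
  rcases h1.cases_tail with h | ⟨c, hac', hcb⟩
  · exact h.symm
  · exact absurd (((TransGen.tail' hac' hcb).trans_left h2)) (hac a)

lemma rt_comparable (huniq : ∀ a b c : W, T' a c → T' b c → a = b) {a x : W}
    (ha : ReflTransGen T' a x) :
    ∀ b, ReflTransGen T' b x → ReflTransGen T' a b ∨ ReflTransGen T' b a := by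
  induction ha with
  | refl => exact fun b hb => Or.inr hb
  | tail h step ih =>
    intro b hb
    rcases hb.cases_tail with rfl | ⟨p, hbp, hpx⟩
    · exact Or.inl (h.tail step)
    · exact ih b (huniq p _ _ hpx step ▸ hbp)
end
section
variable {W : Type*} {T' : W → W → Prop}

lemma chain_reach : ∀ (l : List W), l.Chain' T' → ∀ {s x : W}, l.head? = some s →
    l.getLast? = some x → ReflTransGen T' s x
  | [], _, _, _, h, _ => by simp at h
  | [a], _, s, x, hs, hx => by
      simp only [List.head?_cons, List.getLast?_singleton, Option.some.injEq] at hs hx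
      subst hs; subst hx; exact ReflTransGen.refl
  | a :: b :: rest, hc, s, x, hs, hx => by
      simp only [List.head?_cons, Option.some.injEq] at hs
      subst hs
      simp only [List.Chain'] at hc; rw [List.isChain_cons_cons] at hc
      have hx' : (b :: rest).getLast? = some x := by
        rw [← hx]; exact (List.getLast?_cons_cons ..).symm
      exact ReflTransGen.head hc.1 (chain_reach (b :: rest) hc.2 rfl hx')

lemma mem_between (huniq : ∀ a b c : W, T' a c → T' b c → a = b)
    (hac : ∀ a : W, ¬ TransGen T' a a) :
    ∀ (l : List W), l.Chain' T' → ∀ {s x w : W}, l.head? = some s →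
    l.getLast? = some x → ReflTransGen T' s w → ReflTransGen T' w x → w ∈ l
  | [], _, _, _, _, h, _, _, _ => by simp at h
  | [a], _, s, x, w, hs, hx, hsw, hwx => by
      simp only [List.head?_cons, List.getLast?_singleton, Option.some.injEq] at hs hx
      subst hs; subst hx
      have := rt_antisymm hac hsw hwx
      simp [this]
  | a :: b :: rest, hc, s, x, w, hs, hx, hsw, hwx => by
      simp only [List.head?_cons, Option.some.injEq] at hs
      subst hs
      simp only [List.Chain'] at hc; rw [List.isChain_cons_cons] at hc
      have hx' : (b :: rest).getLast? = some x := by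
        rw [← hx]; exact (List.getLast?_cons_cons ..).symm
      rcases hsw.cases_head with rfl | ⟨c, hac', hcw⟩
      · exact List.mem_cons_self
      · have hbx : ReflTransGen T' b x := chain_reach (b :: rest) hc.2 rfl hx'
        have hcx : ReflTransGen T' c x := hcw.trans hwx
        have hcb : c = b := by
          rcases rt_comparable huniq hcx b hbx with h | h
          · rcases h.cases_tail with h' | ⟨p, hcp, hpb⟩
            · exact h'.symm
            · have hpa : p = a := huniq p a b hpb hc.1
              exact absurd (TransGen.head' hac' (hpa ▸ hcp)) (hac a)
          · rcases h.cases_tail with h' | ⟨p, hbp, hpc⟩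
            · exact h'
            · have hpa : p = a := huniq p a c hpc hac'
              have hba : ReflTransGen T' b a := hpa ▸ hbp
              exact absurd (TransGen.tail' hba hc.1) (hac b)
        have hbw : ReflTransGen T' b w := hcb ▸ hcw
        exact List.mem_cons_of_mem _ (mem_between huniq hac (b :: rest) hc.2 rfl hx' hbw hwx)
end
section
variable {W : Type*} {T' : W → W → Prop}

lemma usedin_cons {l : List W} {x y a : W} (h : UsedIn l x y) : UsedIn (a :: l) x y := by
  obtain ⟨i, h1, h2⟩ := h
  exact ⟨i + 1, by simpa using h1, by simpa using h2⟩

lemma usedin_of_chain {R : W → W → Prop} {l : List W} {x y : W} (hc : l.Chain' R)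
    (h : UsedIn l x y) : R x y := by
  obtain ⟨i, h1, h2⟩ := h
  simp only [List.Chain'] at hc; rw [List.isChain_iff_getElem] at hc
  have hi : i + 1 < l.length := by
    by_contra hle
    rw [List.getElem?_eq_none (le_of_not_gt hle)] at h2
    exact Option.noConfusion rfl (heq_of_eq h2)
  have := hc i (by omega)
  rw [List.getElem?_eq_getElem (by omega), Option.some.injEq] at h1
  rw [List.getElem?_eq_getElem hi, Option.some.injEq] at h2
  rwa [h1, h2] at this

lemma suffix_decomp (R S : W → W → Prop) : ∀ l : List W, l.Chain' S → l ≠ [] →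
    ∃ m s, m <:+ l ∧ m.head? = some s ∧ m.getLast? = l.getLast? ∧ m.Chain' R ∧
      (m = l ∨ ∃ a, UsedIn l a s ∧ S a s ∧ ¬ R a s)
  | [], _, hne => absurd rfl hne
  | [a], _, _ => ⟨[a], a, List.suffix_rfl, rfl, rfl, List.isChain_singleton a, Or.inl rfl⟩
  | a :: b :: rest, hc, _ => by
      simp only [List.Chain'] at hc; rw [List.isChain_cons_cons] at hc
      obtain ⟨m, s, hsuf, hhead, hlast, hchain, halt⟩ :=
        suffix_decomp R S (b :: rest) hc.2 (List.cons_ne_nil b rest)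
      have hsuf' : m <:+ a :: b :: rest := hsuf.trans (List.suffix_cons a (b :: rest))
      have hlast' : (a :: b :: rest).getLast? = (b :: rest).getLast? :=
        List.getLast?_cons_cons ..
      rcases halt with rfl | ⟨a', hused, hSa, hnRa⟩
      · have hs : s = b := by simpa using hhead.symm
        subst hs
        by_cases hR : R a s
        · exact ⟨a :: s :: rest, a, List.suffix_rfl, rfl, rfl,
            List.isChain_cons_cons.2 ⟨hR, hchain⟩, Or.inl rfl⟩
        · exact ⟨s :: rest, s, hsuf', hhead, hlast'.symm ▸ hlast, hchain,
            Or.inr ⟨a, ⟨0, rfl, rfl⟩, hc.1, hR⟩⟩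
      · exact ⟨m, s, hsuf', hhead, hlast.trans hlast'.symm, hchain,
          Or.inr ⟨a', usedin_cons hused, hSa, hnRa⟩⟩

lemma prefix_decomp (R S : W → W → Prop) : ∀ l : List W, l.Chain' S →
    l.Chain' R ∨ ∃ m e f, m <+: l ∧ m.head? = l.head? ∧ m.getLast? = some e ∧ m.Chain' R ∧
      UsedIn l e f ∧ S e f ∧ ¬ R e f
  | [], _ => Or.inl List.isChain_nil
  | [a], _ => Or.inl (List.isChain_singleton a)
  | a :: b :: rest, hc => by
      simp only [List.Chain'] at hc; rw [List.isChain_cons_cons] at hc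
      by_cases hR : R a b
      · rcases prefix_decomp R S (b :: rest) hc.2 with h | ⟨m, e, f, hpre, hhead, hlast, hchain, hused, hS, hnR⟩
        · exact Or.inl (List.isChain_cons_cons.2 ⟨hR, h⟩)
        · obtain ⟨m', rfl⟩ : ∃ m', m = b :: m' := by
            cases m with
            | nil => simp at hhead
            | cons x xs => simp only [List.head?_cons, Option.some.injEq] at hhead; exact ⟨xs, by rw [hhead]⟩
          refine Or.inr ⟨a :: b :: m', e, f, ?_, rfl, ?_, List.isChain_cons_cons.2 ⟨hR, hchain⟩,
            usedin_cons hused, hS, hnR⟩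
          · exact (List.prefix_cons_inj a).2 hpre
          · rw [List.getLast?_cons_cons]; exact hlast
      · exact Or.inr ⟨[a], a, b, ⟨b :: rest, rfl⟩, rfl, rfl, List.isChain_singleton a,
          ⟨0, rfl, rfl⟩, hc.1, hR⟩
end

/-- The structural case analysis of Theorem 1(i): if the leaves `x₁,x₂` have lowest common
ancestor `v` in the tree `T'` and some undirected path of `N = T' ∪ A` from `x₁` to `x₂`
avoiding `v` consists of two directed paths, one ending at `x₁` and one at `x₂` (from a
common top vertex `t`), then either a single lgt-arc `(a,d)` used by the path has
`lca(a,d) = v`, or two used lgt-arcs `(a,b)`, `(c,d)` satisfy `lca a d = v`, `lca c b = v`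
or `lca b d = v`. -/
theorem stmt13 {W : Type*} (T' : W → W → Prop) (hT' : IsRootedTree T')
    (A : W → W → Prop)
    (lca : W → W → W)
    (hlca : ∀ a b : W, Relation.ReflTransGen T' (lca a b) a ∧
        Relation.ReflTransGen T' (lca a b) b ∧
        ∀ c : W, Relation.ReflTransGen T' c a → Relation.ReflTransGen T' c b →
          Relation.ReflTransGen T' c (lca a b))
    (x₁ x₂ v : W)
    (hx₁ : ∀ w : W, ¬ T' x₁ w) (hx₂ : ∀ w : W, ¬ T' x₂ w)
    (hv : lca x₁ x₂ = v)
    (t : W) (p₁ p₂ : List W)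
    (hchain₁ : p₁.Chain' (fun a b => T' a b ∨ A a b))
    (hchain₂ : p₂.Chain' (fun a b => T' a b ∨ A a b))
    (hnd₁ : p₁.Nodup) (hnd₂ : p₂.Nodup)
    (hhead₁ : p₁.head? = some t) (hhead₂ : p₂.head? = some t)
    (hlast₁ : p₁.getLast? = some x₁) (hlast₂ : p₂.getLast? = some x₂)
    (havoid₁ : v ∉ p₁) (havoid₂ : v ∉ p₂) :
    (∃ a d : W, (UsedIn p₁ a d ∨ UsedIn p₂ a d) ∧ ¬ T' a d ∧ lca a d = v) ∨
    (∃ a b c d : W, (UsedIn p₁ a b ∨ UsedIn p₂ a b) ∧ (UsedIn p₁ c d ∨ UsedIn p₂ c d) ∧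
      ¬ T' a b ∧ ¬ T' c d ∧ (lca a d = v ∨ lca c b = v ∨ lca b d = v)) := by
  classical
  obtain ⟨-, huniq, hacyc⟩ := hT'
  have hne₁ : p₁ ≠ [] := fun h => by simp [h] at hhead₁
  have hne₂ : p₂ ≠ [] := fun h => by simp [h] at hhead₂
  have hvx₁ : Relation.ReflTransGen T' v x₁ := hv ▸ (hlca x₁ x₂).1
  have hvx₂ : Relation.ReflTransGen T' v x₂ := hv ▸ (hlca x₁ x₂).2.1
  obtain ⟨m₁, s₁, hsuf₁, hmh₁, hml₁, hmc₁, halt₁⟩ :=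
    suffix_decomp T' (fun a b => T' a b ∨ A a b) p₁ hchain₁ hne₁
  obtain ⟨m₂, s₂, hsuf₂, hmh₂, hml₂, hmc₂, halt₂⟩ :=
    suffix_decomp T' (fun a b => T' a b ∨ A a b) p₂ hchain₂ hne₂
  have hml₁' : m₁.getLast? = some x₁ := hml₁.trans hlast₁
  have hml₂' : m₂.getLast? = some x₂ := hml₂.trans hlast₂
  have hs₁x₁ : Relation.ReflTransGen T' s₁ x₁ := chain_reach m₁ hmc₁ hmh₁ hml₁'
  have hs₂x₂ : Relation.ReflTransGen T' s₂ x₂ := chain_reach m₂ hmc₂ hmh₂ hml₂'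
  have hvs₁ : Relation.ReflTransGen T' v s₁ := by
    rcases rt_comparable huniq hs₁x₁ v hvx₁ with h | h
    · exact absurd (hsuf₁.subset (mem_between huniq hacyc m₁ hmc₁ hmh₁ hml₁' h hvx₁)) havoid₁
    · exact h
  have hvs₂ : Relation.ReflTransGen T' v s₂ := by
    rcases rt_comparable huniq hs₂x₂ v hvx₂ with h | h
    · exact absurd (hsuf₂.subset (mem_between huniq hacyc m₂ hmc₂ hmh₂ hml₂' h hvx₂)) havoid₂
    · exact h
  have htmem : t ∈ p₁ := List.mem_of_mem_head? hhead₁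
  have tbad : Relation.ReflTransGen T' v t → Relation.ReflTransGen T' t x₁ →
      Relation.ReflTransGen T' t x₂ → False := fun h1 h2 h3 => by
    have htv : Relation.ReflTransGen T' t v := hv ▸ (hlca x₁ x₂).2.2 t h2 h3
    exact havoid₁ (rt_antisymm hacyc h1 htv ▸ htmem)
  have key : ∀ y z : W, Relation.ReflTransGen T' v y → Relation.ReflTransGen T' v z →
      Relation.ReflTransGen T' y x₁ → Relation.ReflTransGen T' z x₂ → lca y z = v := by
    intro y z hvy hvz hyx hzx
    have h1 : Relation.ReflTransGen T' (lca y z) v :=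
      hv ▸ (hlca x₁ x₂).2.2 _ ((hlca y z).1.trans hyx) ((hlca y z).2.1.trans hzx)
    have h2 : Relation.ReflTransGen T' v (lca y z) := (hlca y z).2.2 v hvy hvz
    exact rt_antisymm hacyc h1 h2
  rcases halt₁ with heq₁ | ⟨a₁, hused₁, hS₁, hnR₁⟩ <;>
    rcases halt₂ with heq₂ | ⟨a₂, hused₂, hS₂, hnR₂⟩
  · -- both pure tree paths: contradiction
    have hst₁ : s₁ = t := by rw [heq₁, hhead₁, Option.some.injEq] at hmh₁; exact hmh₁.symm
    have hst₂ : s₂ = t := by rw [heq₂, hhead₂, Option.some.injEq] at hmh₂; exact hmh₂.symm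
    exact absurd (tbad (hst₁ ▸ hvs₁) (hst₁ ▸ hs₁x₁) (hst₂ ▸ hs₂x₂)) not_false
  · -- p₁ pure, p₂ has lgt arcs
    have hst₁ : s₁ = t := by rw [heq₁, hhead₁, Option.some.injEq] at hmh₁; exact hmh₁.symm
    have hvt : Relation.ReflTransGen T' v t := hst₁ ▸ hvs₁
    rcases prefix_decomp T' (fun a b => T' a b ∨ A a b) p₂ hchain₂ with
      hpure | ⟨m, e, f, hpre, hheadm, hlastm, hmc, husedef, hSef, hnRef⟩
    · exact absurd (usedin_of_chain hpure hused₂) hnR₂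
    · have hte : Relation.ReflTransGen T' t e :=
        chain_reach m hmc (hheadm.trans hhead₂) hlastm
      have hve : Relation.ReflTransGen T' v e := hvt.trans hte
      have hvw : Relation.ReflTransGen T' v (lca e s₂) := (hlca e s₂).2.2 v hve hvs₂
      have hlcaes : lca e s₂ = v := by
        rcases rt_comparable huniq (hlca e s₂).1 t hte with h | h
        · -- lca e s₂ →* t
          have h1 : Relation.ReflTransGen T' (lca e s₂) v :=
            hv ▸ (hlca x₁ x₂).2.2 _ (h.trans (hst₁ ▸ hs₁x₁)) ((hlca e s₂).2.1.trans hs₂x₂)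
          exact rt_antisymm hacyc h1 hvw
        · -- t →* lca e s₂ : contradiction
          exact absurd (tbad hvt (hst₁ ▸ hs₁x₁)
            ((h.trans (hlca e s₂).2.1).trans hs₂x₂)) not_false
      exact Or.inr ⟨e, f, a₂, s₂, Or.inr husedef, Or.inr hused₂, hnRef, hnR₂, Or.inl hlcaes⟩
  · -- p₂ pure, p₁ has lgt arcs
    have hst₂ : s₂ = t := by rw [heq₂, hhead₂, Option.some.injEq] at hmh₂; exact hmh₂.symm
    have hvt : Relation.ReflTransGen T' v t := hst₂ ▸ hvs₂
    rcases prefix_decomp T' (fun a b => T' a b ∨ A a b) p₁ hchain₁ with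
      hpure | ⟨m, e, f, hpre, hheadm, hlastm, hmc, husedef, hSef, hnRef⟩
    · exact absurd (usedin_of_chain hpure hused₁) hnR₁
    · have hte : Relation.ReflTransGen T' t e :=
        chain_reach m hmc (hheadm.trans hhead₁) hlastm
      have hve : Relation.ReflTransGen T' v e := hvt.trans hte
      have hvw : Relation.ReflTransGen T' v (lca e s₁) := (hlca e s₁).2.2 v hve hvs₁
      have hlcaes : lca e s₁ = v := by
        rcases rt_comparable huniq (hlca e s₁).1 t hte with h | h
        · have h1 : Relation.ReflTransGen T' (lca e s₁) v :=
            hv ▸ (hlca x₁ x₂).2.2 _ ((hlca e s₁).2.1.trans hs₁x₁) (h.trans (hst₂ ▸ hs₂x₂))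
          exact rt_antisymm hacyc h1 hvw
        · exact absurd (tbad hvt ((h.trans (hlca e s₁).2.1).trans hs₁x₁)
            (hst₂ ▸ hs₂x₂)) not_false
      exact Or.inr ⟨e, f, a₁, s₁, Or.inl husedef, Or.inl hused₁, hnRef, hnR₁, Or.inl hlcaes⟩
  · -- both have lgt arcs
    exact Or.inr ⟨a₁, s₁, a₂, s₂, Or.inl hused₁, Or.inr hused₂, hnR₁, hnR₂,
      Or.inr (Or.inr (key s₁ s₂ hvs₁ hvs₂ hs₁x₁ hs₂x₂))⟩
end

section
/- Let T be a rooted tree with vertex set V and leaf set 𝒳, let 𝒢 be a finite set of genes, G : 𝒳 → Set 𝒢, and k a positive integer. For v ∈ V let n(v) be the number of genes g ∈ 𝒢 for which there exist leaves x₁, x₂ with g ∈ G(x₁), g ∈ G(x₂) and lca(x₁,x₂) = v. Let ℓ(T,G,k) be the minimum number of arcs that must be added to T so that the resulting network admits a (G,k)-gene labelling. Then ℓ(T,G,k) ≥ √((2/3)·|{v ∈ V : n(v) > k}|). -/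
/-- `l` is a directed path in the digraph `D` from `a` to `b`. -/
def IsDirPath {V : Type*} (D : V → V → Prop) (a b : V) (l : List V) : Prop :=
  l ≠ [] ∧ l.head? = some a ∧ l.getLast? = some b ∧ l.Chain' D ∧ l.Nodup

open Relation

namespace Stmt14Aux

lemma rtg_trans_of_ne {α : Type*} {D : α → α → Prop} {a b : α}
    (h : ReflTransGen D a b) (hne : a ≠ b) : TransGen D a b := by
  rcases h.cases_head with rfl | ⟨c, hc, hcb⟩
  · exact absurd rfl hne
  · exact TransGen.head' hc hcb

lemma rtg_antisymm {α : Type*} {D : α → α → Prop} (hacyc : ∀ a, ¬ TransGen D a a)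
    {a b : α} (hab : ReflTransGen D a b) (hba : ReflTransGen D b a) : a = b := by
  by_contra hne
  exact hacyc a ((rtg_trans_of_ne hab hne).trans_left hba)

/-- ancestors of a common vertex are comparable, in a unique-parent digraph -/
lemma chainAnc {α : Type*} {D : α → α → Prop} (hup : ∀ x y z, D x z → D y z → x = y)
    {a b c : α} (hac : ReflTransGen D a c) (hbc : ReflTransGen D b c) :
    ReflTransGen D a b ∨ ReflTransGen D b a := by
  revert hbc
  induction hac with
  | refl => intro hbc; exact Or.inr hbc
  | @tail m c' ham hmc ih =>
      intro hbc
      rcases hbc.cases_tail with rfl | ⟨m', hbm', hm'c⟩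
      · exact Or.inl (ham.tail hmc)
      · cases hup m' m c' hm'c hmc
        exact ih hbm'

lemma mem_dropLast_of_get? {α : Type*} :
    ∀ (l : List α) (i : ℕ) (x : α), l[i]? = some x → i + 1 < l.length → x ∈ l.dropLast := by
  intro l
  induction l with
  | nil => intro i x h _; simp at h
  | cons a t ih =>
    intro i x hg hlt
    cases t with
    | nil => simp at hlt
    | cons b t' =>
      rw [List.dropLast_cons₂]
      cases i with
      | zero =>
        simp only [List.getElem?_cons_zero, Option.some_inj] at hg
        exact hg ▸ List.mem_cons_self
      | succ j =>
        exact List.mem_cons_of_mem _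
          (ih j x (by simpa using hg) (by simpa [Nat.succ_lt_succ_iff] using hlt))

lemma mem_tail_dropLast {α : Type*} (l : List α) (i : ℕ) (x : α)
    (hg : l[i+1]? = some x) (hlt : i + 2 < l.length) : x ∈ l.tail.dropLast := by
  cases l with
  | nil => simp at hg
  | cons a t =>
    exact mem_dropLast_of_get? t i x (by simpa using hg) (by simp at hlt ⊢; omega)

section Main

variable {V W : Type*} {T : V → V → Prop} {T' : W → W → Prop} {φ : V → W} {p : V → V → List W}

/-- bundled hypotheses: `T'` is a subdivision of the tree `T`. -/
structure Subdiv (T : V → V → Prop) (T' : W → W → Prop) (φ : V → W) (p : V → V → List W) : Prop where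
  inj : Function.Injective φ
  path : ∀ a b, T a b → IsDirPath T' (φ a) (φ b) (p a b)
  arcs : ∀ x y : W, T' x y ↔ ∃ a b : V, T a b ∧
      ∃ i : ℕ, (p a b)[i]? = some x ∧ (p a b)[i + 1]? = some y
  int1 : ∀ a b : V, T a b → ∀ x ∈ (p a b).tail.dropLast, x ∉ Set.range φ
  int2 : ∀ a b a' b' : V, T a b → T a' b' → (a, b) ≠ (a', b') →
      ∀ x ∈ (p a b).tail.dropLast, x ∉ (p a' b').tail.dropLast
  parent : ∀ a b c : V, T a c → T b c → a = b
  acyc' : ∀ w : W, ¬ TransGen T' w w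

namespace Subdiv

variable (H : Subdiv T T' φ p)
include H

/-- an element of the path at a non-initial, non-final position is interior. -/
lemma interior_not_range {a b : V} (hab : T a b) {i : ℕ} {t : W}
    (hg : (p a b)[i]? = some t) (h0 : 0 < i) (hlt : i + 1 < (p a b).length) :
    t ∉ Set.range φ := by
  have he : i - 1 + 1 = i := by omega
  exact H.int1 a b hab t (mem_tail_dropLast _ (i-1) t (by rw [he]; exact hg) (by omega))

lemma eq_last {a b : V} (hab : T a b) {i : ℕ} {t : W}
    (hg : (p a b)[i]? = some t) (hge : (p a b).length ≤ i + 1) : t = φ b := by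
  obtain ⟨_, _, hl, _, _⟩ := H.path a b hab
  have hlt : i < (p a b).length := (List.getElem?_eq_some_iff.mp hg).1
  rw [List.getLast?_eq_getElem?] at hl
  have he : (p a b).length - 1 = i := by omega
  rw [he, hg] at hl
  exact Option.some_inj.mp hl

lemma eq_head {a b : V} (hab : T a b) {t : W}
    (hg : (p a b)[0]? = some t) : t = φ a := by
  obtain ⟨_, hh, _, _, _⟩ := H.path a b hab
  rw [List.head?_eq_getElem?, hg] at hh
  exact Option.some_inj.mp hh

/-- unique parents in `T'` -/
lemma UP {s s' t : W} (h1 : T' s t) (h2 : T' s' t) : s = s' := by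
  obtain ⟨a, b, hab, i, hgi, hgi1⟩ := (H.arcs _ _).mp h1
  obtain ⟨a', b', hab', j, hgj, hgj1⟩ := (H.arcs _ _).mp h2
  have hlt1 : i + 1 < (p a b).length := (List.getElem?_eq_some_iff.mp hgi1).1
  have hlt2 : j + 1 < (p a' b').length := (List.getElem?_eq_some_iff.mp hgj1).1
  obtain ⟨_, _, _, _, hnd1⟩ := H.path a b hab
  rcases Nat.lt_or_ge (i+2) ((p a b).length) with hi | hi
  · have ht1nr : t ∉ Set.range φ := H.interior_not_range hab hgi1 (by omega) (by omega)
    rcases Nat.lt_or_ge (j+2) ((p a' b').length) with hj | hj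
    · -- both interior
      have hm1 := mem_tail_dropLast _ i t hgi1 hi
      have hm2 := mem_tail_dropLast _ j t hgj1 hj
      have hpair : (a, b) = (a', b') := by
        by_contra hne
        exact H.int2 a b a' b' hab hab' hne t hm1 hm2
      rw [Prod.mk.injEq] at hpair
      obtain ⟨rfl, rfl⟩ := hpair
      have hij : i + 1 = j + 1 := (List.getElem?_inj hlt1 hnd1).mp (hgi1.trans hgj1.symm)
      have : i = j := by omega
      subst this
      exact Option.some_inj.mp (hgi.symm.trans hgj)
    · exact absurd ⟨b', (H.eq_last hab' hgj1 (by omega)).symm⟩ ht1nr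
  · have ht : t = φ b := H.eq_last hab hgi1 (by omega)
    rcases Nat.lt_or_ge (j+2) ((p a' b').length) with hj | hj
    · exact absurd ⟨b, ht.symm⟩ (H.interior_not_range hab' hgj1 (by omega) (by omega))
    · have ht' : t = φ b' := H.eq_last hab' hgj1 (by omega)
      have hbb : b = b' := H.inj (ht.symm.trans ht')
      subst hbb
      have haa : a = a' := H.parent a a' b hab hab'
      subst haa
      have : i = j := by omega
      subst this
      exact Option.some_inj.mp (hgi.symm.trans hgj)

/-- unique successor for interior vertices -/
lemma US {s t t' : W} (hs : s ∉ Set.range φ) (h1 : T' s t) (h2 : T' s t') : t = t' := by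
  obtain ⟨a, b, hab, i, hgi, hgi1⟩ := (H.arcs _ _).mp h1
  obtain ⟨a', b', hab', j, hgj, hgj1⟩ := (H.arcs _ _).mp h2
  have hlt1 : i + 1 < (p a b).length := (List.getElem?_eq_some_iff.mp hgi1).1
  have hlt2 : j + 1 < (p a' b').length := (List.getElem?_eq_some_iff.mp hgj1).1
  obtain ⟨_, _, _, _, hnd1⟩ := H.path a b hab
  have hi0 : 0 < i := by
    rcases Nat.eq_zero_or_pos i with rfl | h
    · exact absurd ⟨a, (H.eq_head hab hgi).symm⟩ hs
    · exact h
  have hj0 : 0 < j := by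
    rcases Nat.eq_zero_or_pos j with rfl | h
    · exact absurd ⟨a', (H.eq_head hab' hgj).symm⟩ hs
    · exact h
  have he1 : i - 1 + 1 = i := by omega
  have he2 : j - 1 + 1 = j := by omega
  have hm1 : s ∈ (p a b).tail.dropLast :=
    mem_tail_dropLast _ (i-1) s (by rw [he1]; exact hgi) (by omega)
  have hm2 : s ∈ (p a' b').tail.dropLast :=
    mem_tail_dropLast _ (j-1) s (by rw [he2]; exact hgj) (by omega)
  have hpair : (a, b) = (a', b') := by
    by_contra hne
    exact H.int2 a b a' b' hab hab' hne s hm1 hm2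
  rw [Prod.mk.injEq] at hpair
  obtain ⟨rfl, rfl⟩ := hpair
  have : i = j := (List.getElem?_inj (by omega) hnd1).mp (hgi.trans hgj.symm)
  subst this
  exact Option.some_inj.mp (hgi1.symm.trans hgj1)

lemma reach_last {a b : V} (hab : T a b) :
    ∀ (k i : ℕ) (w : W), i + k + 1 = (p a b).length → (p a b)[i]? = some w →
      ReflTransGen T' w (φ b) := by
  intro k
  induction k with
  | zero =>
    intro i w hlen hg
    have : w = φ b := H.eq_last hab hg (by omega)
    exact this ▸ ReflTransGen.refl
  | succ k ih =>
    intro i w hlen hg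
    have hlt : i + 1 < (p a b).length := by omega
    have hg1 : (p a b)[i+1]? = some ((p a b).get ⟨i+1, hlt⟩) := List.getElem?_eq_getElem hlt
    have harc : T' w ((p a b).get ⟨i+1, hlt⟩) := (H.arcs _ _).mpr ⟨a, b, hab, i, hg, hg1⟩
    exact ReflTransGen.head harc (ih (i+1) _ (by omega) hg1)

lemma arc_reach {a b : V} (hab : T a b) : ReflTransGen T' (φ a) (φ b) := by
  obtain ⟨hne, hh, _, _, _⟩ := H.path a b hab
  have h0 : (p a b)[0]? = some (φ a) := by rw [← List.head?_eq_getElem?]; exact hh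
  have hlen : 0 < (p a b).length := List.length_pos_iff.mpr hne
  exact H.reach_last hab ((p a b).length - 1) 0 (φ a) (by omega) h0

lemma liftR {a b : V} (h : ReflTransGen T a b) : ReflTransGen T' (φ a) (φ b) := by
  induction h with
  | refl => exact .refl
  | tail _ h2 ih => exact ih.trans (H.arc_reach h2)

lemma neφ {x y : W} (h : TransGen T' x y) : x ≠ y := by
  rintro rfl; exact H.acyc' _ h

lemma liftT (hacycT : ∀ a, ¬ TransGen T a a) {a b : V} (h : TransGen T a b) :
    TransGen T' (φ a) (φ b) := by
  apply rtg_trans_of_ne (H.liftR h.to_reflTransGen)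
  intro he
  have : a = b := H.inj he
  subst this
  exact hacycT a h

lemma PB_aux {x : V} : ∀ {w : W}, ReflTransGen T' w (φ x) →
    (∀ a, w = φ a → ReflTransGen T a x) ∧
    (∀ c d i, T c d → 0 < i → (p c d)[i]? = some w → ReflTransGen T d x) := by
  intro w h
  induction h using ReflTransGen.head_induction_on with
  | refl =>
    constructor
    · intro a ha
      cases H.inj ha
      exact .refl
    · intro c d i hcd hi hg
      have hlt : i < (p c d).length := (List.getElem?_eq_some_iff.mp hg).1
      rcases Nat.lt_or_ge (i+1) ((p c d).length) with hint | hend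
      · exact absurd ⟨x, rfl⟩ (H.interior_not_range hcd hg hi hint)
      · cases H.inj (H.eq_last hcd hg hend)
        exact .refl
  | @head w y h' hr ih =>
    have first : ∀ a, w = φ a → ReflTransGen T a x := by
      intro a ha
      subst ha
      obtain ⟨c, d, hcd, j, hgj, hgj1⟩ := (H.arcs _ _).mp h'
      have hltj : j + 1 < (p c d).length := (List.getElem?_eq_some_iff.mp hgj1).1
      have hj0 : j = 0 := by
        by_contra hj
        exact H.interior_not_range hcd hgj (by omega) (by omega) ⟨a, rfl⟩
      subst hj0
      have hac : a = c := H.inj (H.eq_head hcd hgj)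
      subst hac
      exact ReflTransGen.head hcd (ih.2 a d 1 hcd Nat.one_pos hgj1)
    refine ⟨first, ?_⟩
    intro c d i hcd hi hg
    have hlt : i < (p c d).length := (List.getElem?_eq_some_iff.mp hg).1
    rcases Nat.lt_or_ge (i+1) ((p c d).length) with hint | hend
    · have hnr : w ∉ Set.range φ := H.interior_not_range hcd hg hi hint
      have hg1 : (p c d)[i+1]? = some ((p c d).get ⟨i+1, hint⟩) := List.getElem?_eq_getElem hint
      have harc : T' w ((p c d).get ⟨i+1, hint⟩) := (H.arcs _ _).mpr ⟨c, d, hcd, i, hg, hg1⟩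
      have hy : (p c d).get ⟨i+1, hint⟩ = y := H.US hnr harc h'
      rw [hy] at hg1
      exact ih.2 c d (i+1) hcd (by omega) hg1
    · exact first d (H.eq_last hcd hg hend)

lemma PB {a b : V} (h : ReflTransGen T' (φ a) (φ b)) : ReflTransGen T a b :=
  (H.PB_aux h).1 a rfl

lemma PBT {a b : V} (h : TransGen T' (φ a) (φ b)) : TransGen T a b :=
  rtg_trans_of_ne (H.PB h.to_reflTransGen) (fun he => H.neφ h (congrArg φ he))

lemma LemW {x x' : V} : ∀ {w : W}, ReflTransGen T' w (φ x) → ReflTransGen T' w (φ x') →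
    ∃ u : V, ReflTransGen T' w (φ u) ∧ ReflTransGen T' (φ u) (φ x) ∧
      ReflTransGen T' (φ u) (φ x') := by
  intro w h
  induction h using ReflTransGen.head_induction_on with
  | refl => intro h2; exact ⟨x, .refl, .refl, h2⟩
  | @head w y h' hr ih =>
    intro h2
    by_cases hw : w ∈ Set.range φ
    · obtain ⟨u, rfl⟩ := hw
      exact ⟨u, .refl, ReflTransGen.head h' hr, h2⟩
    · rcases h2.cases_head with heq | ⟨y', hwy', hy'⟩
      · exact absurd ⟨x', heq.symm⟩ hw
      · cases H.US hw h' hwy'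
        obtain ⟨u, h1, h2', h3⟩ := ih hy'
        exact ⟨u, ReflTransGen.head h' h1, h2', h3⟩

lemma INT {S : Set W} :
    ∀ {a c : W}, ReflTransGen (fun u v => T' u v ∧ u ∈ S ∧ v ∈ S) a c → a ∈ S →
    ∀ b, ReflTransGen T' a b → ReflTransGen T' b c → b ∈ S := by
  intro a c hq
  induction hq using ReflTransGen.head_induction_on with
  | refl =>
    intro haS b hab hba
    cases rtg_antisymm H.acyc' hab hba
    exact haS
  | @head a a' hQ hQc ih =>
    intro haS b hab hbc
    obtain ⟨hT'aa', _, ha'S⟩ := hQ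
    by_cases hba : b = a
    · exact hba ▸ haS
    · have ha'c : ReflTransGen T' a' c := ReflTransGen.mono (fun _ _ hh => hh.1) _ _ hQc
      rcases chainAnc (D := T') (fun _ _ _ h1 h2 => H.UP h1 h2) ha'c hbc with ha'b | hba'
      · exact ih ha'S b ha'b hbc
      · rcases hba'.cases_tail with heq | ⟨m, hbm, hma'⟩
        · exact heq ▸ ha'S
        · cases H.UP hma' hT'aa'
          exact absurd ((rtg_trans_of_ne hab (fun hh => hba hh.symm)).trans_left hbm)
            (H.acyc' a)

lemma strictBelow {S : Set W} {vw xw w : W}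
    (hw : w ∈ S) (hv : vw ∉ S)
    (hr : ReflTransGen (fun u v => T' u v ∧ u ∈ S ∧ v ∈ S) w xw)
    (hvx : TransGen T' vw xw) : TransGen T' vw w := by
  have hwx : ReflTransGen T' w xw := ReflTransGen.mono (fun _ _ hh => hh.1) _ _ hr
  rcases chainAnc (D := T') (fun _ _ _ h1 h2 => H.UP h1 h2) hwx hvx.to_reflTransGen with hwv | hvw
  · exact absurd (H.INT hr hw vw hwv hvx.to_reflTransGen) hv
  · exact rtg_trans_of_ne hvw (by rintro rfl; exact hv hw)

end Subdiv

/-- last-crossing extraction -/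
lemma E1 {W : Type*} {N T' : W → W → Prop} {S : Set W} {c : W} :
    ∀ {w : W}, ReflTransGen (fun a b => N a b ∧ a ∈ S ∧ b ∈ S) w c →
    ReflTransGen (fun a b => T' a b ∧ a ∈ S ∧ b ∈ S) w c ∨
    ∃ s t : W, (N s t ∧ ¬ T' s t ∧ s ∈ S ∧ t ∈ S) ∧
      ReflTransGen (fun a b => N a b ∧ a ∈ S ∧ b ∈ S) w s ∧
      ReflTransGen (fun a b => T' a b ∧ a ∈ S ∧ b ∈ S) t c := by
  intro w h
  induction h using ReflTransGen.head_induction_on with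
  | refl => exact Or.inl .refl
  | @head w y h' hr ih =>
    obtain ⟨hN, hwS, hyS⟩ := h'
    rcases ih with hpure | ⟨s, t, hst, hys, htc⟩
    · by_cases hT : T' w y
      · exact Or.inl (ReflTransGen.head ⟨hT, hwS, hyS⟩ hpure)
      · exact Or.inr ⟨w, y, ⟨hN, hT, hwS, hyS⟩, .refl, hpure⟩
    · exact Or.inr ⟨s, t, hst, ReflTransGen.head ⟨hN, hwS, hyS⟩ hys, htc⟩

/-- first-crossing extraction -/
lemma E2 {W : Type*} {N T' : W → W → Prop} {S : Set W} {c : W} :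
    ∀ {w : W}, ReflTransGen (fun a b => N a b ∧ a ∈ S ∧ b ∈ S) w c →
    ReflTransGen (fun a b => T' a b ∧ a ∈ S ∧ b ∈ S) w c ∨
    ∃ s t : W, (N s t ∧ ¬ T' s t ∧ s ∈ S ∧ t ∈ S) ∧
      ReflTransGen (fun a b => T' a b ∧ a ∈ S ∧ b ∈ S) w s ∧
      ReflTransGen (fun a b => N a b ∧ a ∈ S ∧ b ∈ S) t c := by
  intro w h
  induction h using ReflTransGen.head_induction_on with
  | refl => exact Or.inl .refl
  | @head w y h' hr ih =>
    obtain ⟨hN, hwS, hyS⟩ := h'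
    by_cases hT : T' w y
    · rcases ih with hpure | ⟨s, t, hst, hys, htc⟩
      · exact Or.inl (ReflTransGen.head ⟨hT, hwS, hyS⟩ hpure)
      · exact Or.inr ⟨s, t, hst, ReflTransGen.head ⟨hT, hwS, hyS⟩ hys, htc⟩
    · exact Or.inr ⟨w, y, ⟨hN, hT, hwS, hyS⟩, .refl, hr⟩


end Main

section Keys

def DataH {V W : Type*} (T' : W → W → Prop) (φ : V → W) (v : V) (e : W × W) (x : V) : Prop :=
  TransGen T' (φ v) e.2 ∧ ReflTransGen T' e.2 (φ x)

def DataT {V W : Type*} (T' : W → W → Prop) (φ : V → W) (v : V) (e : W × W) (x : V) : Prop :=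
  ∃ w : W, TransGen T' (φ v) w ∧ ReflTransGen T' w (φ x) ∧ ReflTransGen T' w e.1

def P0 {V W : Type*} (T : V → V → Prop) (T' : W → W → Prop) (φ : V → W)
    (N : W → W → Prop) (lca : V → V → V) (v : V) : Prop :=
  ∃ z : (V × V) × (W × W), IsSink T z.1.1 ∧ IsSink T z.1.2 ∧ lca z.1.1 z.1.2 = v ∧
    (N z.2.1 z.2.2 ∧ ¬ T' z.2.1 z.2.2) ∧ DataT T' φ v z.2 z.1.1 ∧ DataH T' φ v z.2 z.1.2

def P1 {V W : Type*} (T : V → V → Prop) (T' : W → W → Prop) (φ : V → W)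
    (N : W → W → Prop) (lca : V → V → V) (v : V) : Prop :=
  ∃ z : (V × V) × ((W × W) × (W × W)), IsSink T z.1.1 ∧ IsSink T z.1.2 ∧ lca z.1.1 z.1.2 = v ∧
    z.2.1 ≠ z.2.2 ∧ (N z.2.1.1 z.2.1.2 ∧ ¬ T' z.2.1.1 z.2.1.2) ∧
    (N z.2.2.1 z.2.2.2 ∧ ¬ T' z.2.2.1 z.2.2.2) ∧
    DataH T' φ v z.2.1 z.1.1 ∧ DataH T' φ v z.2.2 z.1.2

def P2 {V W : Type*} (T : V → V → Prop) (T' : W → W → Prop) (φ : V → W)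
    (N : W → W → Prop) (lca : V → V → V) (v : V) : Prop :=
  ∃ z : (V × V) × ((W × W) × (W × W)), IsSink T z.1.1 ∧ IsSink T z.1.2 ∧ lca z.1.1 z.1.2 = v ∧
    z.2.1 ≠ z.2.2 ∧ (N z.2.1.1 z.2.1.2 ∧ ¬ T' z.2.1.1 z.2.1.2) ∧
    (N z.2.2.1 z.2.2.2 ∧ ¬ T' z.2.2.1 z.2.2.2) ∧
    DataT T' φ v z.2.1 z.1.1 ∧ DataH T' φ v z.2.2 z.1.2

variable {V W : Type*} {T : V → V → Prop} {T' : W → W → Prop} {φ : V → W} {p : V → V → List W}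
variable (H : Subdiv T T' φ p) (hacycT : ∀ a : V, ¬ TransGen T a a) (lca : V → V → V)
  (hlca : ∀ a b : V, ReflTransGen T (lca a b) a ∧ ReflTransGen T (lca a b) b ∧
      ∀ c : V, ReflTransGen T c a → ReflTransGen T c b → ReflTransGen T c (lca a b))

include H hacycT hlca

lemma lcaComm (x y : V) : lca x y = lca y x :=
  rtg_antisymm hacycT
    ((hlca y x).2.2 _ (hlca x y).2.1 (hlca x y).1)
    ((hlca x y).2.2 _ (hlca y x).2.1 (hlca y x).1)

lemma Xcontra {v x x' : V} {w : W} (hl : lca x x' = v)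
    (h1 : TransGen T' (φ v) w) (h2 : ReflTransGen T' w (φ x))
    (h3 : ReflTransGen T' w (φ x')) : False := by
  obtain ⟨u, hwu, hux, hux'⟩ := H.LemW h2 h3
  have huv : ReflTransGen T u v := hl ▸ (hlca x x').2.2 u (H.PB hux) (H.PB hux')
  have hvu : TransGen T v u := H.PBT (h1.trans_left hwu)
  exact hacycT v (hvu.trans_left huv)

lemma dom_of {v v' x x' : V} (hl : lca x x' = v)
    (hvv' : ReflTransGen T' (φ v) (φ v'))
    (hx : ReflTransGen T' (φ v') (φ x)) (hx' : ReflTransGen T' (φ v') (φ x')) : v = v' :=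
  rtg_antisymm hacycT (H.PB hvv') (hl ▸ (hlca x x').2.2 v' (H.PB hx) (H.PB hx'))

lemma KeyHH {v v' x x' y y' : V} {e₁ e₂ : W × W}
    (hl : lca x x' = v) (hl' : lca y y' = v')
    (h1 : DataH T' φ v e₁ x) (h2 : DataH T' φ v e₂ x')
    (h1' : DataH T' φ v' e₁ y) (h2' : DataH T' φ v' e₂ y') : v = v' := by
  rcases chainAnc (D := T') (fun _ _ _ a b => H.UP a b)
      h2.1.to_reflTransGen h2'.1.to_reflTransGen with hvv' | hv'v
  · exact dom_of H hacycT lca hlca hl hvv'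
      (h1'.1.to_reflTransGen.trans h1.2) (h2'.1.to_reflTransGen.trans h2.2)
  · exact (dom_of H hacycT lca hlca hl' hv'v
      (h1.1.to_reflTransGen.trans h1'.2) (h2.1.to_reflTransGen.trans h2'.2)).symm

lemma KeyTT' {v v' x x' y y' : V} {e₁ e₂ : W × W}
    (hvv' : ReflTransGen T' (φ v) (φ v')) (hl : lca x x' = v)
    (h1 : DataT T' φ v e₁ x) (h2 : DataH T' φ v e₂ x')
    (h1' : DataT T' φ v' e₁ y) (h2' : DataH T' φ v' e₂ y') : v = v' := by
  obtain ⟨w, hvw, hwx, hws⟩ := h1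
  obtain ⟨w', hv'w', hw'y, hw's⟩ := h1'
  have hx' : ReflTransGen T' (φ v') (φ x') := h2'.1.to_reflTransGen.trans h2.2
  rcases chainAnc (D := T') (fun _ _ _ a b => H.UP a b) hws hw's with hww' | hw'w
  · rcases chainAnc (D := T') (fun _ _ _ a b => H.UP a b)
        hv'w'.to_reflTransGen hww' with hv'w | hwv'
    · exact dom_of H hacycT lca hlca hl hvv' (hv'w.trans hwx) hx'
    · obtain ⟨u, hwu, hux, huv'⟩ := H.LemW hwx hwv'
      have huv : ReflTransGen T u v :=
        hl ▸ (hlca x x').2.2 u (H.PB hux) (H.PB (huv'.trans hx'))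
      have hvu : TransGen T v u := H.PBT (hvw.trans_left hwu)
      exact absurd (hvu.trans_left huv) (hacycT v)
  · exact dom_of H hacycT lca hlca hl hvv'
      ((hv'w'.to_reflTransGen.trans hw'w).trans hwx) hx'

lemma KeyTT {v v' x x' y y' : V} {e₁ e₂ : W × W}
    (hl : lca x x' = v) (hl' : lca y y' = v')
    (h1 : DataT T' φ v e₁ x) (h2 : DataH T' φ v e₂ x')
    (h1' : DataT T' φ v' e₁ y) (h2' : DataH T' φ v' e₂ y') : v = v' := by
  rcases chainAnc (D := T') (fun _ _ _ a b => H.UP a b)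
      h2.1.to_reflTransGen h2'.1.to_reflTransGen with hvv' | hv'v
  · exact KeyTT' H hacycT lca hlca hvv' hl h1 h2 h1' h2'
  · exact (KeyTT' H hacycT lca hlca hv'v hl' h1' h2' h1 h2).symm

lemma badWitness {𝒢 : Type*} [Fintype 𝒢] (Gm : V → Set 𝒢) (F : W → Set 𝒢) (k : ℕ)
    (hF₁ : ∀ x : V, IsSink T x → F (φ x) = Gm x) (hF₂ : ∀ w : W, (F w).ncard ≤ k)
    {v : V}
    (hv : k < ({g : 𝒢 | ∃ x₁ x₂ : V, IsSink T x₁ ∧ IsSink T x₂ ∧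
        g ∈ Gm x₁ ∧ g ∈ Gm x₂ ∧ lca x₁ x₂ = v}).ncard) :
    ∃ x x' : V, ∃ g : 𝒢, IsSink T x ∧ IsSink T x' ∧ g ∈ Gm x ∧ g ∈ Gm x' ∧ lca x x' = v ∧
      g ∉ F (φ v) ∧ v ≠ x ∧ v ≠ x' := by
  set G : Set 𝒢 := {g : 𝒢 | ∃ x₁ x₂ : V, IsSink T x₁ ∧ IsSink T x₂ ∧
      g ∈ Gm x₁ ∧ g ∈ Gm x₂ ∧ lca x₁ x₂ = v} with hGdef
  have hsub : ¬ (G ⊆ F (φ v)) := by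
    intro hs
    have h1 : G.ncard ≤ (F (φ v)).ncard := Set.ncard_le_ncard hs (Set.toFinite _)
    have h2 := hF₂ (φ v)
    omega
  obtain ⟨g, hgG, hgF⟩ := Set.not_subset.mp hsub
  obtain ⟨x, x', hsx, hsx', hgx, hgx', hl⟩ := hgG
  have hnsv : ¬ IsSink T v := by
    intro hsv
    apply hsub
    rintro g' ⟨y, y', hsy, _, hgy, _, hly⟩
    have hvy : ReflTransGen T v y := hly ▸ (hlca y y').1
    have hveq : v = y := by
      rcases hvy.cases_head with h | ⟨c, hc, _⟩
      · exact h
      · exact absurd hc (hsv c)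
    show g' ∈ F (φ v)
    rw [hF₁ v hsv]
    exact hveq ▸ hgy
  refine ⟨x, x', g, hsx, hsx', hgx, hgx', hl, hgF, ?_, ?_⟩
  · rintro rfl; exact hnsv hsx
  · rintro rfl; exact hnsv hsx'

lemma produce {𝒢 : Type*} (N : W → W → Prop) (hNacyc : ∀ a : W, ¬ TransGen N a a)
    (F : W → Set 𝒢) (Gm : V → Set 𝒢)
    (hF₁ : ∀ x : V, IsSink T x → F (φ x) = Gm x)
    (hF₃ : ∀ g : 𝒢, RootedOn N {w | g ∈ F w})
    {v x x' : V} (g : 𝒢)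
    (hsx : IsSink T x) (hsx' : IsSink T x') (hgx : g ∈ Gm x) (hgx' : g ∈ Gm x')
    (hl : lca x x' = v) (hgv : g ∉ F (φ v)) (hvx : v ≠ x) (hvx' : v ≠ x') :
    P0 T T' φ N lca v ∨ P1 T T' φ N lca v ∨ P2 T T' φ N lca v := by
  have hxS : φ x ∈ {w : W | g ∈ F w} := by
    show g ∈ F (φ x); rw [hF₁ x hsx]; exact hgx
  have hx'S : φ x' ∈ {w : W | g ∈ F w} := by
    show g ∈ F (φ x'); rw [hF₁ x' hsx']; exact hgx'
  have hvS : φ v ∉ {w : W | g ∈ F w} := hgv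
  have hvxT : TransGen T' (φ v) (φ x) :=
    H.liftT hacycT (rtg_trans_of_ne (hl ▸ (hlca x x').1) hvx)
  have hvx'T : TransGen T' (φ v) (φ x') :=
    H.liftT hacycT (rtg_trans_of_ne (hl ▸ (hlca x x').2.1) hvx')
  obtain ⟨r, hrS, hreach⟩ := hF₃ g ⟨φ x, hxS⟩
  have hW1 := hreach (φ x) hxS
  have hW2 := hreach (φ x') hx'S
  rcases E1 (T' := T') hW1 with pure1 | ⟨s₁, t₁, ⟨hN₁, hT₁, hs₁S, ht₁S⟩, hrs₁, ht₁x⟩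
  · have hrb : TransGen T' (φ v) r := H.strictBelow hrS hvS pure1 hvxT
    have hrx : ReflTransGen T' r (φ x) := ReflTransGen.mono (fun _ _ hh => hh.1) _ _ pure1
    rcases E1 (T' := T') hW2 with pure2 | ⟨s₂, t₂, ⟨hN₂, hT₂, hs₂S, ht₂S⟩, hrs₂, ht₂x'⟩
    · exact absurd (Xcontra H hacycT lca hlca hl hrb hrx
        (ReflTransGen.mono (fun _ _ hh => hh.1) _ _ pure2)) (fun hh => hh)
    · have ht₂b : TransGen T' (φ v) t₂ := H.strictBelow ht₂S hvS ht₂x' hvx'T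
      have ht₂r : ReflTransGen T' t₂ (φ x') := ReflTransGen.mono (fun _ _ hh => hh.1) _ _ ht₂x'
      rcases E2 (T' := T') hrs₂ with hpure | ⟨sh, th, ⟨hNh, hTh, hshS, hthS⟩, hrsh, hths⟩
      · exact Or.inl ⟨((x, x'), (s₂, t₂)), hsx, hsx', hl, ⟨hN₂, hT₂⟩,
          ⟨r, hrb, hrx, ReflTransGen.mono (fun _ _ hh => hh.1) _ _ hpure⟩, ht₂b, ht₂r⟩
      · have hne : (sh, th) ≠ (s₂, t₂) := by
          intro heq
          rw [Prod.mk.injEq] at heq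
          obtain ⟨rfl, rfl⟩ := heq
          exact hNacyc sh (TransGen.head' hN₂ (ReflTransGen.mono (fun _ _ hh => hh.1) _ _ hths))
        exact Or.inr (Or.inr ⟨((x, x'), ((sh, th), (s₂, t₂))), hsx, hsx', hl, hne,
          ⟨hNh, hTh⟩, ⟨hN₂, hT₂⟩,
          ⟨r, hrb, hrx, ReflTransGen.mono (fun _ _ hh => hh.1) _ _ hrsh⟩, ht₂b, ht₂r⟩)
  · have ht₁b : TransGen T' (φ v) t₁ := H.strictBelow ht₁S hvS ht₁x hvxT
    have ht₁r : ReflTransGen T' t₁ (φ x) := ReflTransGen.mono (fun _ _ hh => hh.1) _ _ ht₁x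
    rcases E1 (T' := T') hW2 with pure2 | ⟨s₂, t₂, ⟨hN₂, hT₂, hs₂S, ht₂S⟩, hrs₂, ht₂x'⟩
    · have hl2 : lca x' x = v := by rw [lcaComm H hacycT lca hlca x' x]; exact hl
      have hrb : TransGen T' (φ v) r := H.strictBelow hrS hvS pure2 hvx'T
      have hrx' : ReflTransGen T' r (φ x') := ReflTransGen.mono (fun _ _ hh => hh.1) _ _ pure2
      rcases E2 (T' := T') hrs₁ with hpure | ⟨sh, th, ⟨hNh, hTh, hshS, hthS⟩, hrsh, hths⟩
      · exact Or.inl ⟨((x', x), (s₁, t₁)), hsx', hsx, hl2, ⟨hN₁, hT₁⟩,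
          ⟨r, hrb, hrx', ReflTransGen.mono (fun _ _ hh => hh.1) _ _ hpure⟩, ht₁b, ht₁r⟩
      · have hne : (sh, th) ≠ (s₁, t₁) := by
          intro heq
          rw [Prod.mk.injEq] at heq
          obtain ⟨rfl, rfl⟩ := heq
          exact hNacyc sh (TransGen.head' hN₁ (ReflTransGen.mono (fun _ _ hh => hh.1) _ _ hths))
        exact Or.inr (Or.inr ⟨((x', x), ((sh, th), (s₁, t₁))), hsx', hsx, hl2, hne,
          ⟨hNh, hTh⟩, ⟨hN₁, hT₁⟩,
          ⟨r, hrb, hrx', ReflTransGen.mono (fun _ _ hh => hh.1) _ _ hrsh⟩, ht₁b, ht₁r⟩)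
    · have ht₂b : TransGen T' (φ v) t₂ := H.strictBelow ht₂S hvS ht₂x' hvx'T
      have ht₂r : ReflTransGen T' t₂ (φ x') := ReflTransGen.mono (fun _ _ hh => hh.1) _ _ ht₂x'
      have hne : (s₁, t₁) ≠ (s₂, t₂) := by
        intro heq
        rw [Prod.mk.injEq] at heq
        obtain ⟨-, ht⟩ := heq
        subst ht
        exact Xcontra H hacycT lca hlca hl ht₁b ht₁r ht₂r
      exact Or.inr (Or.inl ⟨((x, x'), ((s₁, t₁), (s₂, t₂))), hsx, hsx', hl, hne,
        ⟨hN₁, hT₁⟩, ⟨hN₂, hT₂⟩, ⟨ht₁b, ht₁r⟩, ⟨ht₂b, ht₂r⟩⟩)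

end Keys

end Stmt14Aux

open Stmt14Aux

/-- Theorem 1(i): let `T` be a rooted tree with genome assignment `Gm` on its leaves and
let `n v` count the genes shared by two leaves whose lca is `v`. If a rooted acyclic
digraph `N` contains a subdivision `T'` of `T` (with vertex embedding `φ` and arc-paths
`p`), exactly `h` arcs of `N` are not arcs of `T'`, and `N` admits a `(G,k)`-gene
labelling, then `h ≥ √((2/3)·|{v : n v > k}|)`. -/
theorem stmt14 {V W 𝒢 : Type*} [Fintype V] [Fintype W] [Fintype 𝒢]
    (T : V → V → Prop) (ρ : V)
    (hρ : ∀ v : V, Relation.ReflTransGen T ρ v)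
    (hparent : ∀ a b c : V, T a c → T b c → a = b)
    (hacycT : ∀ a : V, ¬ Relation.TransGen T a a)
    (lca : V → V → V)
    (hlca : ∀ a b : V, Relation.ReflTransGen T (lca a b) a ∧
        Relation.ReflTransGen T (lca a b) b ∧
        ∀ c : V, Relation.ReflTransGen T c a → Relation.ReflTransGen T c b →
          Relation.ReflTransGen T c (lca a b))
    (Gm : V → Set 𝒢) (k h : ℕ) (hk : 0 < k)
    -- `N` is a rooted acyclic digraph:
    (N : W → W → Prop)
    (hNroot : ∃ ρ' : W, ∀ w : W, Relation.ReflTransGen N ρ' w)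
    (hNacyc : ∀ a : W, ¬ Relation.TransGen N a a)
    -- `T'` is a subdivision of `T` contained in `N`:
    (T' : W → W → Prop) (φ : V → W) (p : V → V → List W)
    (hφ : Function.Injective φ)
    (hpath : ∀ a b : V, T a b → IsDirPath T' (φ a) (φ b) (p a b))
    (harcs : ∀ x y : W, T' x y ↔ ∃ a b : V, T a b ∧
        ∃ i : ℕ, (p a b)[i]? = some x ∧ (p a b)[i + 1]? = some y)
    (hint₁ : ∀ a b : V, T a b → ∀ x ∈ (p a b).tail.dropLast, x ∉ Set.range φ)
    (hint₂ : ∀ a b a' b' : V, T a b → T a' b' → (a, b) ≠ (a', b') →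
        ∀ x ∈ (p a b).tail.dropLast, x ∉ (p a' b').tail.dropLast)
    (hsub : ∀ x y : W, T' x y → N x y)
    -- exactly `h` arcs of `N` are not arcs of `T'`:
    (hcount : ({q : W × W | N q.1 q.2 ∧ ¬ T' q.1 q.2}).ncard = h)
    -- `N` admits a `(G,k)`-gene labelling:
    (F : W → Set 𝒢)
    (hF₁ : ∀ x : V, IsSink T x → F (φ x) = Gm x)
    (hF₂ : ∀ w : W, (F w).ncard ≤ k)
    (hF₃ : ∀ g : 𝒢, RootedOn N {w | g ∈ F w}) :
    Real.sqrt ((2 / 3) *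
        (({v : V | ({g : 𝒢 | ∃ x₁ x₂ : V, IsSink T x₁ ∧ IsSink T x₂ ∧
            g ∈ Gm x₁ ∧ g ∈ Gm x₂ ∧ lca x₁ x₂ = v}).ncard > k}).ncard : ℝ)) ≤
      (h : ℝ) := by
  classical
  have H : Subdiv T T' φ p :=
    ⟨hφ, hpath, harcs, hint₁, hint₂, hparent, fun w hw => hNacyc w (TransGen.mono hsub _ _ hw)⟩
  set Bad : Set V := {v : V | ({g : 𝒢 | ∃ x₁ x₂ : V, IsSink T x₁ ∧ IsSink T x₂ ∧
      g ∈ Gm x₁ ∧ g ∈ Gm x₂ ∧ lca x₁ x₂ = v}).ncard > k} with hBadDef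
  set E : Set (W × W) := {q : W × W | N q.1 q.2 ∧ ¬ T' q.1 q.2} with hEdef
  have hcover : ∀ v ∈ Bad, P0 T T' φ N lca v ∨ P1 T T' φ N lca v ∨ P2 T T' φ N lca v := by
    intro v hv
    obtain ⟨x, x', g, hsx, hsx', hgx, hgx', hl, hgF, hvx, hvx'⟩ :=
      badWitness H hacycT lca hlca Gm F k hF₁ hF₂ hv
    exact produce H hacycT lca hlca N hNacyc F Gm hF₁ hF₃ g hsx hsx' hgx hgx' hl hgF hvx hvx'
  -- skolemized choice data for the three classes
  have hc0 : ∀ v : V, ∃ e : W × W, P0 T T' φ N lca v →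
      ∃ yy : V × V, IsSink T yy.1 ∧ IsSink T yy.2 ∧ lca yy.1 yy.2 = v ∧ e ∈ E ∧
        DataT T' φ v e yy.1 ∧ DataH T' φ v e yy.2 := by
    intro v
    by_cases hv : P0 T T' φ N lca v
    · obtain ⟨z, h1, h2, h3, h4, h5, h6⟩ := hv
      exact ⟨z.2, fun _ => ⟨z.1, h1, h2, h3, h4, h5, h6⟩⟩
    · exact ⟨(φ ρ, φ ρ), fun hc => absurd hc hv⟩
  obtain ⟨f0, hf0⟩ := Classical.axiomOfChoice hc0
  have hc1 : ∀ v : V, ∃ ee : (W × W) × (W × W), P1 T T' φ N lca v →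
      ∃ yy : V × V, IsSink T yy.1 ∧ IsSink T yy.2 ∧ lca yy.1 yy.2 = v ∧ ee.1 ≠ ee.2 ∧
        ee.1 ∈ E ∧ ee.2 ∈ E ∧ DataH T' φ v ee.1 yy.1 ∧ DataH T' φ v ee.2 yy.2 := by
    intro v
    by_cases hv : P1 T T' φ N lca v
    · obtain ⟨z, h1, h2, h3, h4, h5, h6, h7, h8⟩ := hv
      exact ⟨z.2, fun _ => ⟨z.1, h1, h2, h3, h4, h5, h6, h7, h8⟩⟩
    · exact ⟨((φ ρ, φ ρ), (φ ρ, φ ρ)), fun hc => absurd hc hv⟩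
  obtain ⟨f1, hf1⟩ := Classical.axiomOfChoice hc1
  have hc2 : ∀ v : V, ∃ ee : (W × W) × (W × W), P2 T T' φ N lca v →
      ∃ yy : V × V, IsSink T yy.1 ∧ IsSink T yy.2 ∧ lca yy.1 yy.2 = v ∧ ee.1 ≠ ee.2 ∧
        ee.1 ∈ E ∧ ee.2 ∈ E ∧ DataT T' φ v ee.1 yy.1 ∧ DataH T' φ v ee.2 yy.2 := by
    intro v
    by_cases hv : P2 T T' φ N lca v
    · obtain ⟨z, h1, h2, h3, h4, h5, h6, h7, h8⟩ := hv
      exact ⟨z.2, fun _ => ⟨z.1, h1, h2, h3, h4, h5, h6, h7, h8⟩⟩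
    · exact ⟨((φ ρ, φ ρ), (φ ρ, φ ρ)), fun hc => absurd hc hv⟩
  obtain ⟨f2, hf2⟩ := Classical.axiomOfChoice hc2
  -- bound for class 0
  have hA0 : ({v : V | P0 T T' φ N lca v}).ncard ≤ h := by
    rw [← hcount]
    apply Set.ncard_le_ncard_of_injOn f0
    · intro v hv
      obtain ⟨yy, _, _, _, hE, _, _⟩ := hf0 v hv
      exact hE
    · intro v hv v' hv' heq
      obtain ⟨yy, hs1, hs2, hl, _, hT, hH⟩ := hf0 v hv
      obtain ⟨zz, hs1', hs2', hl', _, hT', hH'⟩ := hf0 v' hv'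
      rw [heq] at hT hH
      exact KeyTT H hacycT lca hlca hl hl' hT hH hT' hH'
  -- cardinality of the off-diagonal
  have hfinE : E.Finite := Set.toFinite _
  have hoff : E.offDiag.ncard = h * h - h := by
    have h1 : E.offDiag = ↑(hfinE.toFinset.offDiag) := by
      ext z
      simp [Set.mem_offDiag, Finset.mem_offDiag, Set.Finite.mem_toFinset, hEdef, Set.mem_setOf_eq]
    rw [h1, Set.ncard_coe_finset, Finset.offDiag_card,
      ← Set.ncard_eq_toFinset_card E hfinE, hcount]
  -- bound for class 2
  have hA2 : ({v : V | P2 T T' φ N lca v}).ncard ≤ h * h - h := by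
    rw [← hoff]
    apply Set.ncard_le_ncard_of_injOn f2
    · intro v hv
      obtain ⟨yy, _, _, _, hne, hE1, hE2, _, _⟩ := hf2 v hv
      exact Set.mem_offDiag.mpr ⟨hE1, hE2, hne⟩
    · intro v hv v' hv' heq
      obtain ⟨yy, hs1, hs2, hl, _, _, _, hT, hH⟩ := hf2 v hv
      obtain ⟨zz, hs1', hs2', hl', _, _, _, hT', hH'⟩ := hf2 v' hv'
      rw [heq] at hT hH
      exact KeyTT H hacycT lca hlca hl hl' hT hH hT' hH'
  -- bound for class 1 (each unordered pair used at most once)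
  have hinj1 : Set.InjOn f1 {v : V | P1 T T' φ N lca v} := by
    intro v hv v' hv' heq
    obtain ⟨yy, hs1, hs2, hl, hne, _, _, hT, hH⟩ := hf1 v hv
    obtain ⟨zz, hs1', hs2', hl', hne', _, _, hT', hH'⟩ := hf1 v' hv'
    rw [heq] at hT hH
    exact KeyHH H hacycT lca hlca hl hl' hT hH hT' hH'
  have hinj2 : Set.InjOn (fun v => ((f1 v).2, (f1 v).1)) {v : V | P1 T T' φ N lca v} := by
    intro v hv v' hv' heq
    have h1 : (f1 v).2 = (f1 v').2 := congrArg Prod.fst heq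
    have h2 : (f1 v).1 = (f1 v').1 := congrArg Prod.snd heq
    exact hinj1 hv hv' (Prod.ext h2 h1)
  have hmem1 : f1 '' {v : V | P1 T T' φ N lca v} ⊆ E.offDiag := by
    rintro z ⟨v, hv, rfl⟩
    obtain ⟨yy, _, _, _, hne, hE1, hE2, _, _⟩ := hf1 v hv
    exact Set.mem_offDiag.mpr ⟨hE1, hE2, hne⟩
  have hmem2 : (fun v => ((f1 v).2, (f1 v).1)) '' {v : V | P1 T T' φ N lca v} ⊆ E.offDiag := by
    rintro z ⟨v, hv, rfl⟩
    obtain ⟨yy, _, _, _, hne, hE1, hE2, _, _⟩ := hf1 v hv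
    exact Set.mem_offDiag.mpr ⟨hE2, hE1, hne.symm⟩
  have hdisj : Disjoint (f1 '' {v : V | P1 T T' φ N lca v})
      ((fun v => ((f1 v).2, (f1 v).1)) '' {v : V | P1 T T' φ N lca v}) := by
    rw [Set.disjoint_left]
    rintro z ⟨v, hv, rfl⟩ ⟨v', hv', heq⟩
    obtain ⟨yy, hs1, hs2, hl, hne, _, _, hT, hH⟩ := hf1 v hv
    obtain ⟨zz, hs1', hs2', hl', hne', _, _, hT', hH'⟩ := hf1 v' hv'
    have h1 : (f1 v').2 = (f1 v).1 := congrArg Prod.fst heq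
    have h2 : (f1 v').1 = (f1 v).2 := congrArg Prod.snd heq
    rw [h1] at hH'
    rw [h2] at hT'
    have hl'' : lca zz.2 zz.1 = v' := by
      rw [lcaComm H hacycT lca hlca]; exact hl'
    have hveq : v = v' := KeyHH H hacycT lca hlca hl hl'' hT hH hH' hT'
    subst hveq
    exact hne h1.symm
  have hA1 : 2 * ({v : V | P1 T T' φ N lca v}).ncard ≤ h * h - h := by
    have e1 : (f1 '' {v : V | P1 T T' φ N lca v}).ncard
        = ({v : V | P1 T T' φ N lca v}).ncard := Set.ncard_image_of_injOn hinj1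
    have e2 : ((fun v => ((f1 v).2, (f1 v).1)) '' {v : V | P1 T T' φ N lca v}).ncard
        = ({v : V | P1 T T' φ N lca v}).ncard := Set.ncard_image_of_injOn hinj2
    have e3 := Set.ncard_union_eq hdisj (Set.toFinite _) (Set.toFinite _)
    have e4 : ((f1 '' {v : V | P1 T T' φ N lca v}) ∪
        ((fun v => ((f1 v).2, (f1 v).1)) '' {v : V | P1 T T' φ N lca v})).ncard
        ≤ E.offDiag.ncard :=
      Set.ncard_le_ncard (Set.union_subset hmem1 hmem2) (Set.toFinite _)
    omega
  -- assemble the cardinality bound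
  have hmBad : Bad.ncard ≤ ({v : V | P0 T T' φ N lca v}).ncard
      + ({v : V | P1 T T' φ N lca v}).ncard + ({v : V | P2 T T' φ N lca v}).ncard := by
    have hsub2 : Bad ⊆ {v : V | P0 T T' φ N lca v} ∪ {v : V | P1 T T' φ N lca v}
        ∪ {v : V | P2 T T' φ N lca v} := by
      intro v hv
      rcases hcover v hv with hx | hx | hx
      · exact Set.mem_union_left _ (Set.mem_union_left _ hx)
      · exact Set.mem_union_left _ (Set.mem_union_right _ hx)
      · exact Set.mem_union_right _ hx
    calc Bad.ncard ≤ (({v : V | P0 T T' φ N lca v} ∪ {v : V | P1 T T' φ N lca v})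
          ∪ {v : V | P2 T T' φ N lca v}).ncard :=
        Set.ncard_le_ncard hsub2 (Set.toFinite _)
      _ ≤ ({v : V | P0 T T' φ N lca v} ∪ {v : V | P1 T T' φ N lca v}).ncard
          + ({v : V | P2 T T' φ N lca v}).ncard := Set.ncard_union_le _ _
      _ ≤ _ := by
          have := Set.ncard_union_le {v : V | P0 T T' φ N lca v} {v : V | P1 T T' φ N lca v}
          omega
  have hq : h ≤ h * h := by
    rcases Nat.eq_zero_or_pos h with rfl | hp
    · simp
    · exact Nat.le_mul_of_pos_left h hp
  have hkey : 2 * Bad.ncard ≤ 3 * (h * h) := by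
    generalize hg : h * h = q at hA1 hA2 hq ⊢
    omega
  have hreal : (2 / 3 : ℝ) * (Bad.ncard : ℝ) ≤ (h : ℝ) ^ 2 := by
    have h1 : ((2 * Bad.ncard : ℕ) : ℝ) ≤ ((3 * (h * h) : ℕ) : ℝ) := Nat.cast_le.mpr hkey
    push_cast at h1
    nlinarith [h1]
  calc Real.sqrt (2 / 3 * (Bad.ncard : ℝ)) ≤ Real.sqrt ((h : ℝ) ^ 2) :=
      Real.sqrt_le_sqrt hreal
    _ = (h : ℝ) := Real.sqrt_sq (Nat.cast_nonneg h)
end
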